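/- arXiv:1911.08809 — 5 statements merged into one kernel-verified Lean document; each statement's English description precedes it below -/
import Mathlib

section
/- The distance-based mechanism is individually rational: for every buyer i with true type θ_i = (v_i, r_i) and every profile θ'_{-i} of reports of the other buyers, if i reports θ_i truthfully then her utility is nonnegative, i.e., v_i·f_i(θ_i, θ'_{-i}) − t_i(θ_i, θ'_{-i}) ≥ 0. -/
open scoped Classical NNReal ENNReal

namespace SNA

/-- A reported type `θ'_i = (v'_i, r'_i)`: a (nonnegative) value for one unit together with
the set of followers to whom the buyer forwards the information. -/
abbrev Profile (N : Type*) := N → ℝ≥0 × Finset N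

variable {N : Type*} [Fintype N] [DecidableEq N] [LinearOrder N]

/-- `reachIn θ rs m i`: in the digraph induced by the reported profile `θ` and the
seller's direct-buyer set `rs` (the seller links to every member of `rs`, and each buyer
`j` links to every member of `(θ j).2`), there is a directed path from the seller to `i`
using exactly `m + 1` edges. -/
def reachIn (θ : Profile N) (rs : Finset N) : ℕ → N → Prop
  | 0, i => i ∈ rs
  | m + 1, i => ∃ j, reachIn θ rs m j ∧ i ∈ (θ j).2

/-- Buyer `i` is connected: reachable from the seller. -/
def Connected (θ : Profile N) (rs : Finset N) (i : N) : Prop :=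
  ∃ m, reachIn θ rs m i

/-- `N̂`: the set of connected buyers. -/
noncomputable def Nhat (θ : Profile N) (rs : Finset N) : Finset N :=
  Finset.univ.filter (Connected θ rs)

/-- `d(i)`: the length of a shortest directed path from the seller to `i`
(`⊤` if `i` is not connected). -/
noncomputable def dNet (θ : Profile N) (rs : Finset N) (i : N) : ℕ∞ :=
  sInf {n : ℕ∞ | ∃ m : ℕ, reachIn θ rs m i ∧ n = (m : ℕ∞) + 1}

/-- Reachability from the seller by a directed path that avoids buyer `j`. -/
def reachInAvoid (θ : Profile N) (rs : Finset N) (j : N) : ℕ → N → Prop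
  | 0, i => i ∈ rs ∧ i ≠ j
  | m + 1, i => ∃ a, reachInAvoid θ rs j m a ∧ i ∈ (θ a).2 ∧ i ≠ j

/-- `j` is a critical parent of `i`: both are connected, `j ≠ i`, and every directed path
from the seller to `i` passes through `j`. -/
def CriticalParent (θ : Profile N) (rs : Finset N) (j i : N) : Prop :=
  Connected θ rs i ∧ Connected θ rs j ∧ j ≠ i ∧ ¬ ∃ m, reachInAvoid θ rs j m i

/-- The descendants of `i` in the diffusion critical tree `T(θ)`, i.e. `i` together with
the connected buyers lying in the subtree of `T(θ)` rooted at `i`; the ancestors of a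
buyer in the diffusion critical tree are exactly its critical parents. -/
noncomputable def desc (θ : Profile N) (rs : Finset N) (i : N) : Finset N :=
  Finset.univ.filter fun j => Connected θ rs j ∧ (j = i ∨ CriticalParent θ rs i j)

/-- `N̂₋ᵢ`: the connected buyers with `i` and all of its descendants in the diffusion
critical tree removed. -/
noncomputable def NhatMinus (θ : Profile N) (rs : Finset N) (i : N) : Finset N :=
  Nhat θ rs \ desc θ rs i

/-- The `k'`-th highest element of a multiset of values (as an element of `ℝ≥0∞`):
`⊤` if `k' ≤ 0`, and `0` if the multiset has fewer than `k'` elements. -/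
noncomputable def kthHighest (s : Multiset ℝ≥0) (k' : ℕ) : ℝ≥0∞ :=
  if k' = 0 then ⊤
  else if s.card < k' then 0
  else ((s.sort (· ≤ ·)).getD (s.card - k') 0 : ℝ≥0)

/-- `v*(S, k')`: the `k'`-th highest reported value among the buyers in `S`. -/
noncomputable def vstar (θ : Profile N) (S : Finset N) (k' : ℕ) : ℝ≥0∞ :=
  kthHighest (S.val.map fun i => (θ i).1) k'

/-- The priority order on the connected buyers: ascending order of the distance `d(·)`,
with ties broken by the fixed linear order on `N` (mergeSort is stable). -/
noncomputable def prioList (θ : Profile N) (rs : Finset N) : List N :=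
  ((Nhat θ rs).sort (· ≤ ·)).mergeSort fun i j => decide (dNet θ rs i ≤ dNet θ rs j)

/-- One run of the distance-based mechanism over a list of buyers (in priority order),
given the current winner set `W` and the remaining number of units `k'`; `extra` is an
additional pool of (dummy) values included in every price computation.
Buyer `i` faces the price `p = v*((N̂₋ᵢ ∖ W) + extra, k')` and wins (paying `p`)
iff her reported value is at least `p`. -/
noncomputable def runAux (θ : Profile N) (rs : Finset N) (extra : Multiset ℝ≥0) :
    List N → Finset N → ℕ → (N → ℕ) × (N → ℝ≥0)
  | [], _, _ => (fun _ => 0, fun _ => 0)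
  | i :: rest, W, k' =>
    let p : ℝ≥0∞ :=
      kthHighest (((NhatMinus θ rs i \ W).val.map fun j => (θ j).1) + extra) k'
    if (((θ i).1 : ℝ≥0∞)) ≥ p then
      let out := runAux θ rs extra rest (insert i W) (k' - 1)
      (Function.update out.1 i 1, Function.update out.2 i p.toNNReal)
    else
      let out := runAux θ rs extra rest W k'
      (Function.update out.1 i 0, Function.update out.2 i 0)

/-- The distance-based mechanism: `.1` is the allocation rule `f` (each buyer is mapped
to `1` if she wins a unit and to `0` otherwise; unconnected buyers get `0`) and `.2` is
the payment rule `t` (unconnected buyers and losers pay `0`). -/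
noncomputable def DBM (k : ℕ) (θ : Profile N) (rs : Finset N) : (N → ℕ) × (N → ℝ≥0) :=
  runAux θ rs 0 (prioList θ rs) ∅ k

/-- The distance-based mechanism with reserve price `vh`: `k` dummy buyers of value `vh`,
attached directly to the seller only (hence lying in every `N̂₋ᵢ` and never being
descendants of a real buyer), are added to every price pool, but they are never processed
as bidders and never win a unit. -/
noncomputable def DBMres (k : ℕ) (vh : ℝ≥0) (θ : Profile N) (rs : Finset N) :
    (N → ℕ) × (N → ℝ≥0) :=
  runAux θ rs (Multiset.replicate k vh) (prioList θ rs) ∅ k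

/-- The No-Diffusion-VCG mechanism: VCG applied to the direct buyers only. -/
noncomputable def NDVCG (k : ℕ) (θ : Profile N) (rs : Finset N) : (N → ℕ) × (N → ℝ≥0) :=
  (fun i => if i ∈ rs ∧ (((θ i).1 : ℝ≥0∞)) ≥ vstar θ (rs.erase i) k then 1 else 0,
   fun i => if i ∈ rs ∧ (((θ i).1 : ℝ≥0∞)) ≥ vstar θ (rs.erase i) k
     then (vstar θ (rs.erase i) k).toNNReal else 0)

/-- The FCFS-F mechanism: the first `k` connected buyers in the priority order get a
unit for free. -/
noncomputable def FCFS (k : ℕ) (θ : Profile N) (rs : Finset N) : (N → ℕ) × (N → ℝ≥0) :=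
  (fun i => if i ∈ (prioList θ rs).take k then 1 else 0, fun _ => 0)


lemma runAux_IR (θ : Profile N) (rs : Finset N) (extra : Multiset ℝ≥0) (i : N) :
    ∀ (L : List N) (W : Finset N) (k' : ℕ),
      ((runAux θ rs extra L W k').2 i : ℝ≥0) ≤
        (θ i).1 * ((runAux θ rs extra L W k').1 i : ℝ≥0)
  | [], W, k' => by simp [runAux]
  | j :: rest, W, k' => by
    rw [runAux]
    set p : ℝ≥0∞ :=
      kthHighest (((NhatMinus θ rs j \ W).val.map fun a => (θ a).1) + extra) k' with hp
    by_cases h : (((θ j).1 : ℝ≥0∞)) ≥ p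
    · rw [if_pos h]
      by_cases hij : i = j
      · subst hij
        simp only [Function.update_self]
        have hptop : p ≠ ⊤ := fun ht => by simp [ht] at h
        have : p.toNNReal ≤ (θ i).1 := by
          rw [← ENNReal.coe_le_coe, ENNReal.coe_toNNReal hptop]; exact h
        simpa using this
      · simp only [Function.update_of_ne hij]
        exact runAux_IR θ rs extra i rest (insert j W) (k' - 1)
    · rw [if_neg h]
      by_cases hij : i = j
      · subst hij; simp
      · simp only [Function.update_of_ne hij]
        exact runAux_IR θ rs extra i rest W k'

/-- The distance-based mechanism is individually rational: for every
buyer `i` with true type `θ i` and every profile of reports of the other buyers (the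
remaining components of `θ`), if `i` reports truthfully then her utility
`v_i · f_i(θ) − t_i(θ)` is nonnegative. -/
theorem distanceBased_individuallyRational (k : ℕ) (θ : Profile N) (rs : Finset N)
    (i : N) :
    0 ≤ ((θ i).1 : ℝ) * ((DBM k θ rs).1 i : ℝ) - ((DBM k θ rs).2 i : ℝ) := by
  have h := runAux_IR θ rs 0 i (prioList θ rs) ∅ k
  have h' : (((DBM k θ rs).2 i : ℝ)) ≤ ((θ i).1 : ℝ) * ((DBM k θ rs).1 i : ℝ) := by
    have := (NNReal.coe_le_coe).2 h
    simpa [DBM, NNReal.coe_mul] using this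
  linarith

end SNA
end

section
/- The distance-based mechanism is non-wasteful: for every reported type profile θ', the number of units allocated satisfies Σ_{i∈N} f_i(θ') ≥ min{k, |N̂|}, where N̂ is the set of connected buyers. -/
open scoped Classical NNReal ENNReal

namespace SNA

variable {N : Type*} [Fintype N] [DecidableEq N] [LinearOrder N]

/- ### Auxiliary lemmas for non-wastefulness -/

lemma kthHighest_lt_count {s : Multiset ℝ≥0} {k' : ℕ} (hk : k' ≠ 0) {v : ℝ≥0}
    (h : (v : ℝ≥0∞) < kthHighest s k') :
    k' ≤ Multiset.card (s.filter fun x => v < x) := by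
  unfold kthHighest at h
  rw [if_neg hk] at h
  by_cases hc : Multiset.card s < k'
  · rw [if_pos hc] at h; simp at h
  · rw [if_neg hc] at h
    push_neg at hc
    set l := s.sort (· ≤ ·) with hl
    have hlen : l.length = Multiset.card s := s.length_sort _
    have hsort : l.Pairwise (· ≤ ·) := s.pairwise_sort _
    have hse : (l : Multiset ℝ≥0) = s := s.sort_eq _
    rw [ENNReal.coe_lt_coe] at h
    set m := Multiset.card s - k' with hm
    have hmlt : m < l.length := by omega
    rw [List.getD_eq_getElem l 0 hmlt] at h
    have hcp : ∀ a ∈ l.drop m, v < a := by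
      intro a ha
      obtain ⟨j, hj, hja⟩ := List.getElem_of_mem ha
      rw [List.getElem_drop] at hja
      subst hja
      rcases Nat.eq_zero_or_pos j with rfl | hjpos
      · simpa using h
      · exact lt_of_lt_of_le h
          (List.pairwise_iff_getElem.mp hsort m (m + j) hmlt (by
            have := hj; rw [List.length_drop] at this; omega) (by omega))
    have h1 : (l.drop m).countP (fun x => decide (v < x)) = (l.drop m).length :=
      List.countP_eq_length.mpr (fun a ha => by simpa using hcp a ha)
    have h2 : (l.drop m).length = k' := by rw [List.length_drop]; omega
    have h3 : l.countP (fun x => decide (v < x)) ≥ k' := by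
      conv_lhs => rw [← List.take_append_drop m l]
      rw [List.countP_append]
      omega
    calc k' ≤ l.countP (fun x => decide (v < x)) := h3
      _ = Multiset.card (s.filter fun x => v < x) := by
          rw [← hse]
          simp [Multiset.filter_coe, Multiset.coe_countP, List.countP_eq_length_filter]

lemma runAux_fst_eq_zero (θ : Profile N) (rs : Finset N) (extra : Multiset ℝ≥0) :
    ∀ (L : List N) (W : Finset N) (k' : ℕ) (j : N), j ∉ L →
      (runAux θ rs extra L W k').1 j = 0 := by
  intro L
  induction L with
  | nil => intro W k' j _; simp [runAux]
  | cons i L ih =>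
    intro W k' j hj
    rw [runAux]
    have hji : j ≠ i := fun h => hj (h ▸ (List.mem_cons_self : i ∈ i :: L))
    have hjL : j ∉ L := fun h => hj (List.mem_cons_of_mem _ h)
    dsimp only
    split
    · simp only [Function.update_of_ne hji]; exact ih _ _ j hjL
    · simp only [Function.update_of_ne hji]; exact ih _ _ j hjL

lemma sum_update_eq {f : N → ℕ} {i : N} (hf : f i = 0) (b : ℕ) :
    ∑ j, Function.update f i b j = b + ∑ j, f j := by
  rw [Finset.sum_update_of_mem (Finset.mem_univ i)]
  congr 1
  apply Finset.sum_subset Finset.sdiff_subset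
  intro x _ hx
  have hxi : x = i := by
    by_contra hne
    exact hx (Finset.mem_sdiff.mpr ⟨Finset.mem_univ x, by simpa using hne⟩)
  rw [hxi, hf]

lemma runAux_invariant (θ : Profile N) (rs : Finset N) :
    ∀ (L : List N) (W D : Finset N) (k' : ℕ),
      L.Nodup →
      Disjoint D L.toFinset →
      Nhat θ rs \ W = D ∪ L.toFinset →
      (∀ j ∈ D, k' ≤ (((D ∪ L.toFinset) \ desc θ rs j).filter
          (fun a => (θ j).1 < (θ a).1)).card) →
      min k' L.length ≤ ∑ i, (runAux θ rs 0 L W k').1 i ∧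
        (∑ i, (runAux θ rs 0 L W k').1 i < k' → D = ∅) := by
  intro L
  induction L with
  | nil =>
    intro W D k' _ _ _ hD
    have hsum : ∑ i, (runAux θ rs 0 ([] : List N) W k').1 i = 0 := by
      simp [runAux]
    refine ⟨by simp [hsum], ?_⟩
    intro hlt
    rw [hsum] at hlt
    by_contra hne
    obtain ⟨j, hj, hmax⟩ := Finset.exists_max_image D (fun a => (θ a).1)
      (Finset.nonempty_iff_ne_empty.mpr hne)
    have := hD j hj
    have hzero : (((D ∪ ([] : List N).toFinset) \ desc θ rs j).filter
        (fun a => (θ j).1 < (θ a).1)).card = 0 := by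
      rw [Finset.card_eq_zero, Finset.filter_eq_empty_iff]
      intro a ha
      have haD : a ∈ D := by
        simp only [List.toFinset_nil, Finset.union_empty, Finset.mem_sdiff] at ha
        exact ha.1
      exact not_lt.mpr (hmax a haD)
    omega
  | cons i L ih =>
    intro W D k' hnd hdisj hNW hD
    have hiL : i ∉ L := (List.nodup_cons.mp hnd).1
    have hndL : L.Nodup := (List.nodup_cons.mp hnd).2
    have hiD : i ∉ D := fun h =>
      (Finset.disjoint_left.mp hdisj h) (by simp)
    have hiLf : i ∉ L.toFinset := by simpa using hiL
    have htf : (i :: L).toFinset = insert i L.toFinset := by simp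
    rcases Nat.eq_zero_or_pos k' with rfl | hk'
    · exact ⟨by simp, fun h => absurd h (Nat.not_lt_zero _)⟩
    obtain ⟨k'', rfl⟩ : ∃ k'', k' = k'' + 1 := ⟨k' - 1, by omega⟩
    rw [runAux]
    dsimp only
    set p : ℝ≥0∞ := kthHighest
      (((NhatMinus θ rs i \ W).val.map fun j => (θ j).1) + 0) (k'' + 1) with hp
    have hdisjL : Disjoint D L.toFinset :=
      Finset.disjoint_of_subset_right (by simp [htf]) hdisj
    by_cases hwin : (((θ i).1 : ℝ≥0∞)) ≥ p
    · -- buyer i wins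
      rw [if_pos hwin]
      simp only [Nat.add_sub_cancel]
      set out := runAux θ rs 0 L (insert i W) k'' with hout
      have houtz : out.1 i = 0 := runAux_fst_eq_zero θ rs 0 L _ _ i hiL
      have hsum : ∑ j, (Function.update out.1 i 1) j = 1 + ∑ j, out.1 j :=
        sum_update_eq houtz 1
      have hNW' : Nhat θ rs \ insert i W = D ∪ L.toFinset := by
        ext x
        have hx := Finset.ext_iff.mp hNW x
        simp only [Finset.mem_sdiff, Finset.mem_union, Finset.mem_insert,
          htf, List.mem_toFinset] at hx ⊢
        constructor
        · rintro ⟨hxN, hxW⟩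
          rcases (hx.mp ⟨hxN, fun h => hxW (Or.inr h)⟩) with h | h | h
          · exact Or.inl h
          · exact absurd (Or.inl h) hxW
          · exact Or.inr h
        · rintro (h | h)
          · have := hx.mpr (Or.inl h)
            exact ⟨this.1, fun hc => by
              rcases hc with rfl | hc
              exacts [hiD h, this.2 hc]⟩
          · have := hx.mpr (Or.inr (Or.inr h))
            exact ⟨this.1, fun hc => by
              rcases hc with rfl | hc
              exacts [hiL (by simpa using h), this.2 hc]⟩
      have hD' : ∀ j ∈ D, k'' ≤ (((D ∪ L.toFinset) \ desc θ rs j).filter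
          (fun a => (θ j).1 < (θ a).1)).card := by
        intro j hj
        have h1 := hD j hj
        have hsub : (D ∪ (i :: L).toFinset) \ desc θ rs j ⊆
            insert i ((D ∪ L.toFinset) \ desc θ rs j) := by
          intro x hx
          simp only [htf, Finset.mem_sdiff, Finset.mem_union, Finset.mem_insert,
            List.mem_toFinset] at hx ⊢
          tauto
        have h2 : (((D ∪ (i :: L).toFinset) \ desc θ rs j).filter
            (fun a => (θ j).1 < (θ a).1)).card ≤
            ((insert i ((D ∪ L.toFinset) \ desc θ rs j)).filter
            (fun a => (θ j).1 < (θ a).1)).card :=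
          Finset.card_le_card (Finset.filter_subset_filter _ hsub)
        have h3 : ((insert i ((D ∪ L.toFinset) \ desc θ rs j)).filter
            (fun a => (θ j).1 < (θ a).1)).card ≤
            (((D ∪ L.toFinset) \ desc θ rs j).filter
            (fun a => (θ j).1 < (θ a).1)).card + 1 := by
          rw [Finset.filter_insert]
          split
          · exact Finset.card_insert_le _ _
          · omega
        omega
      obtain ⟨ihm, ihz⟩ := ih (insert i W) D k'' hndL hdisjL hNW' hD'
      rw [← hout] at ihm ihz
      constructor
      · rw [hsum]
        have : min (k'' + 1) (i :: L).length = min k'' L.length + 1 := by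
          simp only [List.length_cons]
          omega
        rw [this]
        omega
      · intro hlt
        rw [hsum] at hlt
        exact ihz (by omega)
    · -- buyer i loses
      rw [if_neg hwin]
      set out := runAux θ rs 0 L W (k'' + 1) with hout
      have houtz : out.1 i = 0 := runAux_fst_eq_zero θ rs 0 L _ _ i hiL
      have hsum : ∑ j, (Function.update out.1 i 0) j = ∑ j, out.1 j :=
        (sum_update_eq houtz 0).trans (Nat.zero_add _)
      -- the key certificate from losing
      have hlt : ((θ i).1 : ℝ≥0∞) < p := lt_of_not_ge hwin
      have hcert0 : k'' + 1 ≤ Multiset.card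
          ((((NhatMinus θ rs i \ W).val.map fun j => (θ j).1).filter
            fun x => (θ i).1 < x)) := by
        have := kthHighest_lt_count (k' := k'' + 1) (by omega)
          (s := ((NhatMinus θ rs i \ W).val.map fun j => (θ j).1) + 0)
          (v := (θ i).1) (by rw [← hp]; exact hlt)
        simpa using this
      have hcert1 : k'' + 1 ≤ ((NhatMinus θ rs i \ W).filter
          (fun a => (θ i).1 < (θ a).1)).card := by
        have e1 : Multiset.card
            ((((NhatMinus θ rs i \ W).val.map fun j => (θ j).1).filter
              fun x => (θ i).1 < x)) =
            Multiset.card ((NhatMinus θ rs i \ W).val.filter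
              fun a => (θ i).1 < (θ a).1) := by
          rw [← Multiset.countP_eq_card_filter, Multiset.countP_map,
            ← Multiset.countP_eq_card_filter]
        have e2 : ((NhatMinus θ rs i \ W).filter (fun a => (θ i).1 < (θ a).1)).card =
            Multiset.card ((NhatMinus θ rs i \ W).val.filter
              fun a => (θ i).1 < (θ a).1) := rfl
        rw [e2, ← e1]
        exact hcert0
      have hpoole : NhatMinus θ rs i \ W =
          (insert i D ∪ L.toFinset) \ desc θ rs i := by
        ext x
        have hx := Finset.ext_iff.mp hNW x
        simp only [NhatMinus, Finset.mem_sdiff, Finset.mem_union, Finset.mem_insert,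
          htf, List.mem_toFinset] at hx ⊢
        constructor
        · rintro ⟨⟨hxN, hxd⟩, hxW⟩
          rcases hx.mp ⟨hxN, hxW⟩ with h | h | h
          exacts [⟨Or.inl (Or.inr h), hxd⟩, ⟨Or.inl (Or.inl h), hxd⟩,
            ⟨Or.inr h, hxd⟩]
        · rintro ⟨hmem, hxd⟩
          have hxNW : x ∈ Nhat θ rs ∧ x ∉ W := by
            rcases hmem with (rfl | h) | h
            exacts [hx.mpr (Or.inr (Or.inl rfl)), hx.mpr (Or.inl h),
              hx.mpr (Or.inr (Or.inr h))]
          exact ⟨⟨hxNW.1, hxd⟩, hxNW.2⟩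
      have hseteq : D ∪ (i :: L).toFinset = insert i D ∪ L.toFinset := by
        ext x
        simp only [htf, Finset.mem_union, Finset.mem_insert, List.mem_toFinset]
        tauto
      have hdisj' : Disjoint (insert i D) L.toFinset := by
        rw [Finset.disjoint_insert_left]
        exact ⟨hiLf, Finset.disjoint_of_subset_right (by simp [htf]) hdisj⟩
      have hNW'' : Nhat θ rs \ W = insert i D ∪ L.toFinset := by
        rw [hNW, hseteq]
      have hD' : ∀ j ∈ insert i D, k'' + 1 ≤
          (((insert i D ∪ L.toFinset) \ desc θ rs j).filter
            (fun a => (θ j).1 < (θ a).1)).card := by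
        intro j hj
        rcases Finset.mem_insert.mp hj with rfl | hjD
        · rw [← hpoole]; exact hcert1
        · rw [← hseteq]; exact hD j hjD
      obtain ⟨ihm, ihz⟩ := ih W (insert i D) (k'' + 1) hndL hdisj' hNW'' hD'
      rw [← hout] at ihm ihz
      have hge : k'' + 1 ≤ ∑ j, out.1 j := by
        by_contra hc
        exact (Finset.insert_ne_empty i D) (ihz (by omega))
      rw [hsum]
      exact ⟨le_trans (min_le_left _ _) hge, fun h => absurd h (by omega)⟩

/-- The distance-based mechanism is non-wasteful: for every reported
type profile, the number of allocated units is at least `min k |N̂|`. -/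
theorem distanceBased_nonWasteful (k : ℕ) (θ : Profile N) (rs : Finset N) :
    min k (Nhat θ rs).card ≤ ∑ i, (DBM k θ rs).1 i := by
  have hperm : (prioList θ rs).Perm ((Nhat θ rs).sort (· ≤ ·)) :=
    List.mergeSort_perm _ _
  have hnd : (prioList θ rs).Nodup := hperm.nodup_iff.mpr (Finset.sort_nodup _ _)
  have htf : (prioList θ rs).toFinset = Nhat θ rs := by
    rw [List.toFinset_eq_of_perm _ _ hperm, Finset.sort_toFinset]
  have hlen : (prioList θ rs).length = (Nhat θ rs).card := by
    rw [hperm.length_eq, Finset.length_sort]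
  have := runAux_invariant θ rs (prioList θ rs) ∅ ∅ k hnd (by simp)
    (by simp [htf]) (by simp)
  rw [hlen] at this
  simpa [DBM] using this.1

end SNA
end

section
/- The distance-based mechanism satisfies bounded efficiency: for every reported type profile θ' and every connected buyer i with f_i(θ') = 1, the number of buyers in N̂_{-i} whose reported value strictly exceeds v'_i is less than k; that is, every winner is among the top-k buyers when her descendants in the diffusion critical tree are excluded. -/
open scoped Classical NNReal ENNReal

namespace SNA

variable {N : Type*} [Fintype N] [DecidableEq N] [LinearOrder N]

lemma kth_count (s : Multiset ℝ≥0) (k' : ℕ) (hk : k' ≠ 0) (c : ℝ≥0)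
    (h : kthHighest s k' ≤ (c : ℝ≥0∞)) :
    (s.filter fun x => c < x).card < k' := by
  by_cases hcard : s.card < k'
  · exact lt_of_le_of_lt (Multiset.card_le_card (Multiset.filter_le _ s)) hcard
  push_neg at hcard
  set l := s.sort (· ≤ ·) with hl
  have hlen : l.length = s.card := Multiset.length_sort _
  set m := s.card - k' with hm
  have hmlt : m < l.length := by omega
  have ha : kthHighest s k' = ((l[m] : ℝ≥0) : ℝ≥0∞) := by
    rw [kthHighest, if_neg hk, if_neg (not_lt.mpr hcard), ← hl, List.getD_eq_getElem l 0 hmlt]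
  have hac : l[m] ≤ c := by
    rw [ha] at h; exact_mod_cast h
  have hsorted : l.Pairwise (· ≤ ·) := Multiset.pairwise_sort _ _
  have hrw : (s.filter fun x => c < x) = ((l.filter fun x => decide (c < x)) : List ℝ≥0) := by
    conv_lhs => rw [← Multiset.sort_eq s (· ≤ ·)]
    rw [Multiset.filter_coe]
  rw [hrw, Multiset.coe_card]
  have hsplit : l.filter (fun x => decide (c < x)) =
      (l.take (m+1)).filter (fun x => decide (c < x)) ++
      (l.drop (m+1)).filter (fun x => decide (c < x)) := by
    rw [← List.filter_append, List.take_append_drop]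
  have htake : (l.take (m+1)).filter (fun x => decide (c < x)) = [] := by
    rw [List.filter_eq_nil_iff]
    intro x hx
    rw [List.mem_take_iff_getElem] at hx
    obtain ⟨j, hj, rfl⟩ := hx
    have hj2 : j < l.length := lt_of_lt_of_le hj (min_le_right _ _)
    have hle : l.get ⟨j, hj2⟩ ≤ l.get ⟨m, hmlt⟩ := by
      apply hsorted.rel_get_of_le
      simp only [Fin.mk_le_mk]
      omega
    simp only [List.get_eq_getElem] at hle
    simp only [decide_eq_true_eq, not_lt]
    exact le_trans hle hac
  rw [hsplit, List.length_append, htake]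
  have : ((l.drop (m+1)).filter (fun x => decide (c < x))).length ≤ (l.drop (m+1)).length :=
    List.length_filter_le _ _
  rw [List.length_drop] at this
  simp only [List.length_nil]
  omega

set_option linter.unusedSectionVars false in
lemma run_key (k : ℕ) (θ : Profile N) (rs : Finset N) (i : N) :
    ∀ (L : List N) (W : Finset N) (k' : ℕ), W.card + k' ≤ k →
    (runAux θ rs 0 L W k').1 i = 1 →
    ((NhatMinus θ rs i).filter fun j => (θ i).1 < (θ j).1).card < k := by
  intro L
  induction L with
  | nil => intro W k' _ hw; simp [runAux] at hw
  | cons a rest ih =>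
    intro W k' hWk hw
    rw [runAux] at hw
    set p : ℝ≥0∞ :=
      kthHighest (((NhatMinus θ rs a \ W).val.map fun j => (θ j).1) + 0) k' with hp
    by_cases hcond : (((θ a).1 : ℝ≥0∞)) ≥ p
    · rw [if_pos hcond] at hw
      simp only at hw
      have hk0 : k' ≠ 0 := by
        rintro rfl
        rw [hp, kthHighest, if_pos rfl] at hcond
        exact (ENNReal.coe_lt_top (r := (θ a).1)).not_ge (top_le_iff.mp hcond ▸ le_refl _)
      by_cases hai : a = i
      · subst hai
        have hcount := kth_count _ k' hk0 (θ a).1 (by rw [← hp]; exact hcond)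
        rw [add_zero] at hcount
        rw [Multiset.filter_map, Multiset.card_map] at hcount
        have hsub : (NhatMinus θ rs a).filter (fun j => (θ a).1 < (θ j).1) ⊆
            ((NhatMinus θ rs a \ W).filter fun j => (θ a).1 < (θ j).1) ∪ W := by
          intro j hj
          rw [Finset.mem_filter] at hj
          by_cases hjW : j ∈ W
          · exact Finset.mem_union_right _ hjW
          · exact Finset.mem_union_left _ (Finset.mem_filter.mpr
              ⟨Finset.mem_sdiff.mpr ⟨hj.1, hjW⟩, hj.2⟩)
        have hccard : ((NhatMinus θ rs a \ W).filter fun j => (θ a).1 < (θ j).1).card < k' := by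
          convert hcount using 2
          rfl
        calc ((NhatMinus θ rs a).filter fun j => (θ a).1 < (θ j).1).card
            ≤ (((NhatMinus θ rs a \ W).filter fun j => (θ a).1 < (θ j).1) ∪ W).card :=
              Finset.card_le_card hsub
          _ ≤ ((NhatMinus θ rs a \ W).filter fun j => (θ a).1 < (θ j).1).card + W.card :=
              Finset.card_union_le _ _
          _ < k' + W.card := by omega
          _ ≤ k := by omega
      · rw [Function.update_of_ne (Ne.symm hai)] at hw
        exact ih (insert a W) (k' - 1)
          (by have := Finset.card_insert_le a W; omega) hw
    · rw [if_neg hcond] at hw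
      simp only at hw
      by_cases hai : a = i
      · subst hai; rw [Function.update_self] at hw; exact absurd hw (by norm_num)
      · rw [Function.update_of_ne (Ne.symm hai)] at hw
        exact ih W k' hWk hw

/-- **Proposition 1.** The distance-based mechanism satisfies bounded
efficiency: every connected winner `i` is among the top-`k` buyers once her descendants
in the diffusion critical tree are excluded, i.e. fewer than `k` buyers of `N̂₋ᵢ` have a
reported value strictly exceeding `i`'s. -/
theorem distanceBased_boundedEfficiency (k : ℕ) (θ : Profile N) (rs : Finset N) (i : N)
    (hc : Connected θ rs i) (hw : (DBM k θ rs).1 i = 1) :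
    ((NhatMinus θ rs i).filter fun j => (θ i).1 < (θ j).1).card < k :=
  run_key k θ rs i (prioList θ rs) ∅ k (by simp) hw

end SNA
end

section
/- If every buyer's value is at most v̄, the distance-based mechanism with reserve price v_h = v̄/2 is 1/2-inefficient: under truthful reporting, for every type profile θ the efficiency loss satisfies max_{x feasible} Σ_{i∈N} v_i·x_i − Σ_{i∈N} v_i·f_i(θ) ≤ k·v̄/2, and this bound is tight in the worst case; moreover, v_h = v̄/2 minimizes the worst-case efficiency loss max(k·v_h, k·(v̄−v_h)) over reserve prices v_h. -/
open scoped Classical NNReal ENNReal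

namespace SNA

variable {N : Type*} [Fintype N] [DecidableEq N] [LinearOrder N]

/-! ### Auxiliary lemmas for the proof -/

section AuxKth

lemma kth_countP_ge (s : Multiset ℝ≥0) (k' : ℕ) (h0 : k' ≠ 0) (hk : k' ≤ Multiset.card s) :
    k' ≤ s.countP (fun a => ((s.sort (· ≤ ·)).getD (Multiset.card s - k') 0) ≤ a) := by
  classical
  set l := s.sort (· ≤ ·) with hl
  have hlen : l.length = Multiset.card s := s.length_sort _
  set n := Multiset.card s - k' with hn
  have hnl : n < l.length := by omega
  set c := l.getD n 0 with hc
  have hcc : c = l[n] := by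
    rw [hc, List.getD_eq_getElem?_getD, List.getElem?_eq_getElem hnl]
    rfl
  have hsort : l.Pairwise (· ≤ ·) := s.pairwise_sort _
  have hdropeq : l.drop n = l[n] :: l.drop (n+1) := List.drop_eq_getElem_cons hnl
  have hdrop : ∀ a ∈ l.drop n, c ≤ a := by
    intro a ha
    rw [hdropeq] at ha
    rcases List.mem_cons.1 ha with h | h
    · rw [hcc, h]
    · have hs2 : (l.drop n).Pairwise (· ≤ ·) := hsort.sublist (List.drop_sublist _ _)
      rw [hdropeq] at hs2
      exact hcc ▸ (List.rel_of_pairwise_cons hs2 h)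
  have hle : (↑(l.drop n) : Multiset ℝ≥0) ≤ s := by
    conv_rhs => rw [← Multiset.sort_eq s (· ≤ ·)]
    exact (List.drop_sublist _ _).subperm
  calc k' = Multiset.card (↑(l.drop n) : Multiset ℝ≥0) := by
            simp [Multiset.coe_card, List.length_drop, hlen]; omega
    _ = Multiset.countP (fun a => c ≤ a) (↑(l.drop n) : Multiset ℝ≥0) := by
          rw [Multiset.countP_eq_card.2]
          intro a ha
          exact hdrop a (by exact_mod_cast ha)
    _ ≤ s.countP (fun a => c ≤ a) := Multiset.countP_le_of_le _ hle

lemma le_kth_of_countP (s : Multiset ℝ≥0) (k' : ℕ) (vh : ℝ≥0) (h0 : k' ≠ 0)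
    (hcP : k' ≤ s.countP (fun a => vh ≤ a)) :
    vh ≤ (s.sort (· ≤ ·)).getD (Multiset.card s - k') 0 := by
  classical
  have hk : k' ≤ Multiset.card s := le_trans hcP (Multiset.countP_le_card _ _)
  set l := s.sort (· ≤ ·) with hl
  have hlen : l.length = Multiset.card s := s.length_sort _
  set n := Multiset.card s - k' with hn
  have hnl : n < l.length := by omega
  set c := l.getD n 0 with hc
  have hcc : c = l[n] := by
    rw [hc, List.getD_eq_getElem?_getD, List.getElem?_eq_getElem hnl]; rfl
  have hsort : l.Pairwise (· ≤ ·) := s.pairwise_sort _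
  by_contra hlt
  push_neg at hlt  -- c < vh
  have htake : ∀ a ∈ l.take (n+1), a ≤ c := by
    intro a ha
    obtain ⟨i, hi, rfl⟩ := List.mem_iff_getElem.1 ha
    have hi' : i < n + 1 := lt_of_lt_of_le hi (by simp [List.length_take])
    rw [List.getElem_take, hcc]
    exact hsort.rel_get_of_le (by simpa using Nat.le_of_lt_succ hi')
  have h1 : n + 1 ≤ Multiset.countP (fun a => a ≤ c) s := by
    have hle : (↑(l.take (n+1)) : Multiset ℝ≥0) ≤ s := by
      conv_rhs => rw [← Multiset.sort_eq s (· ≤ ·)]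
      exact (List.take_sublist _ _).subperm
    calc n + 1 = Multiset.card (↑(l.take (n+1)) : Multiset ℝ≥0) := by
            simp [List.length_take]; omega
      _ = Multiset.countP (fun a => a ≤ c) (↑(l.take (n+1)) : Multiset ℝ≥0) := by
            rw [Multiset.countP_eq_card.2]
            intro a ha; exact htake a (by exact_mod_cast ha)
      _ ≤ _ := Multiset.countP_le_of_le _ hle
  have h2 : Multiset.countP (fun a => vh ≤ a) s ≤ Multiset.countP (fun a => ¬ (a ≤ c)) s := by
    simp only [Multiset.countP_eq_card_filter]
    apply Multiset.card_le_card
    apply Multiset.monotone_filter_right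
    intro a hva hac
    exact absurd (le_trans hva hac) (not_le.2 hlt)
  have h3 : Multiset.countP (fun a => ¬ (a ≤ c)) s
      = Multiset.card s - Multiset.countP (fun a => a ≤ c) s := by
    have := Multiset.card_eq_countP_add_countP (fun a => a ≤ c) s
    omega
  omega

lemma vh_le_kthHighest (m : Multiset ℝ≥0) (k k' : ℕ) (vh : ℝ≥0) (h0 : k' ≠ 0) (hk : k' ≤ k) :
    (vh : ℝ≥0∞) ≤ kthHighest (m + Multiset.replicate k vh) k' := by
  classical
  have hcard : ¬ (Multiset.card (m + Multiset.replicate k vh) < k') := by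
    simp only [Multiset.card_add, Multiset.card_replicate]; omega
  rw [kthHighest, if_neg h0, if_neg hcard, ENNReal.coe_le_coe]
  apply le_kth_of_countP _ _ _ h0
  calc k' ≤ k := hk
    _ ≤ Multiset.countP (fun a => vh ≤ a) (Multiset.replicate k vh) := by
          rw [Multiset.countP_eq_card.2 (fun a ha => by
            rw [Multiset.eq_of_mem_replicate ha])]
          simp
    _ ≤ _ := by rw [Multiset.countP_add]; omega

lemma kthHighest_zero (s : Multiset ℝ≥0) : kthHighest s 0 = ⊤ := if_pos rfl

end AuxKth

section Run

variable (θ : Profile N) (rs : Finset N) (extra : Multiset ℝ≥0)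

/-- Winner-set semantics of `runAux`. -/
noncomputable def runW : List N → Finset N → ℕ → Finset N × ℕ
  | [], W, k' => (W, k')
  | i :: rest, W, k' =>
    if (((θ i).1 : ℝ≥0∞)) ≥
        kthHighest (((NhatMinus θ rs i \ W).val.map fun j => (θ j).1) + extra) k' then
      runW rest (insert i W) (k' - 1)
    else runW rest W k'

lemma not_cond_zero (i : N) (W : Finset N) :
    ¬ ((((θ i).1 : ℝ≥0∞)) ≥
        kthHighest (((NhatMinus θ rs i \ W).val.map fun j => (θ j).1) + extra) 0) := by
  rw [kthHighest_zero]
  intro h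
  exact ENNReal.coe_ne_top (top_le_iff.1 h)

lemma runW_subset_left : ∀ (L : List N) (W : Finset N) (k' : ℕ),
    W ⊆ (runW θ rs extra L W k').1
  | [], W, k' => by simp [runW]
  | i :: rest, W, k' => by
    rw [runW]
    split
    · exact (Finset.subset_insert i W).trans (runW_subset_left rest _ _)
    · exact runW_subset_left rest _ _

lemma runW_subset_union : ∀ (L : List N) (W : Finset N) (k' : ℕ),
    (runW θ rs extra L W k').1 ⊆ W ∪ L.toFinset
  | [], W, k' => by simp [runW]
  | i :: rest, W, k' => by
    rw [runW]
    split
    · refine (runW_subset_union rest _ _).trans ?_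
      intro j hj
      rcases Finset.mem_union.1 hj with hj | hj
      · rcases Finset.mem_insert.1 hj with rfl | hj
        · simp
        · exact Finset.mem_union_left _ hj
      · simp only [List.toFinset_cons, Finset.mem_union, Finset.mem_insert]
        tauto
    · refine (runW_subset_union rest _ _).trans ?_
      intro j hj
      simp only [List.toFinset_cons, Finset.mem_union, Finset.mem_insert] at *
      tauto

lemma runW_snd_le : ∀ (L : List N) (W : Finset N) (k' : ℕ),
    (runW θ rs extra L W k').2 ≤ k'
  | [], W, k' => le_rfl
  | i :: rest, W, k' => by
    rw [runW]
    split
    · exact (runW_snd_le rest _ _).trans (Nat.sub_le _ _)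
    · exact runW_snd_le rest _ _

lemma runW_card : ∀ (L : List N) (W : Finset N) (k' : ℕ), L.Nodup → (∀ j ∈ L, j ∉ W) →
    (runW θ rs extra L W k').2 + ((runW θ rs extra L W k').1).card = k' + W.card
  | [], W, k' => by intro _ _; simp [runW]
  | i :: rest, W, k' => by
    intro hnd hdis
    rw [runW]
    by_cases hk : k' = 0
    · subst hk
      rw [if_neg (not_cond_zero θ rs extra i W)]
      exact runW_card rest W 0 hnd.of_cons (fun j hj => hdis j (List.mem_cons_of_mem _ hj))
    · split
      · have hiW : i ∉ W := hdis i (List.mem_cons_self)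
        have h1 := runW_card rest (insert i W) (k'-1) hnd.of_cons
          (fun j hj => by
            simp only [Finset.mem_insert, not_or]
            exact ⟨fun h => (List.nodup_cons.1 hnd).1 (h ▸ hj),
                   hdis j (List.mem_cons_of_mem _ hj)⟩)
        rw [Finset.card_insert_of_notMem hiW] at h1
        omega
      · have h1 := runW_card rest W k' hnd.of_cons
          (fun j hj => hdis j (List.mem_cons_of_mem _ hj))
        omega

lemma runW_append : ∀ (L₁ L₂ : List N) (W : Finset N) (k' : ℕ),
    runW θ rs extra (L₁ ++ L₂) W k'
      = runW θ rs extra L₂ (runW θ rs extra L₁ W k').1 (runW θ rs extra L₁ W k').2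
  | [], L₂, W, k' => by simp [runW]
  | i :: rest, L₂, W, k' => by
    rw [List.cons_append, runW, runW]
    split
    · exact runW_append rest L₂ _ _
    · exact runW_append rest L₂ _ _

lemma runW_winner_val (k : ℕ) (vh : ℝ≥0) : ∀ (L : List N) (W : Finset N) (k' : ℕ),
    k' ≤ k →
    ∀ i ∈ (runW θ rs (Multiset.replicate k vh) L W k').1, i ∈ W ∨ vh ≤ (θ i).1
  | [], W, k' => by intro _ i hi; rw [runW] at hi; exact Or.inl hi
  | h :: rest, W, k' => by
    intro hk i hi
    rw [runW] at hi
    by_cases h0 : k' = 0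
    · subst h0
      rw [if_neg (not_cond_zero θ rs _ h W)] at hi
      exact runW_winner_val k vh rest W 0 hk i hi
    · by_cases hcond : (((θ h).1 : ℝ≥0∞)) ≥
        kthHighest (((NhatMinus θ rs h \ W).val.map fun j => (θ j).1)
          + Multiset.replicate k vh) k'
      · rw [if_pos hcond] at hi
        rcases runW_winner_val k vh rest (insert h W) (k'-1)
          (le_trans (Nat.sub_le _ _) hk) i hi with hw | hv
        · rcases Finset.mem_insert.1 hw with rfl | hw
          · right
            have h1 := vh_le_kthHighest
              ((NhatMinus θ rs i \ W).val.map fun j => (θ j).1) k k' vh h0 hk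
            exact_mod_cast le_trans h1 hcond
          · exact Or.inl hw
        · exact Or.inr hv
      · rw [if_neg hcond] at hi
        exact runW_winner_val k vh rest W k' hk i hi

lemma runAux_fst_eq : ∀ (L : List N) (W : Finset N) (k' : ℕ), L.Nodup →
    (∀ j ∈ L, j ∉ W) → ∀ i,
    (runAux θ rs extra L W k').1 i
      = if i ∈ (runW θ rs extra L W k').1 ∧ i ∉ W then 1 else 0
  | [], W, k' => by
    intro _ _ i
    rw [runAux, runW]
    rw [if_neg (by tauto)]
  | h :: rest, W, k' => by
    intro hnd hdis i
    rw [runAux, runW]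
    dsimp only
    by_cases hcond : (((θ h).1 : ℝ≥0∞)) ≥
        kthHighest (((NhatMinus θ rs h \ W).val.map fun j => (θ j).1) + extra) k'
    · rw [if_pos hcond, if_pos hcond]
      dsimp only
      by_cases hih : i = h
      · subst hih
        rw [Function.update_self, if_pos]
        exact ⟨runW_subset_left θ rs extra rest _ _ (Finset.mem_insert_self _ _),
          hdis i (List.mem_cons_self)⟩
      · rw [Function.update_of_ne hih]
        rw [runAux_fst_eq rest (insert h W) (k'-1) hnd.of_cons
          (fun j hj => by
            simp only [Finset.mem_insert, not_or]
            exact ⟨fun he => (List.nodup_cons.1 hnd).1 (he ▸ hj),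
                   hdis j (List.mem_cons_of_mem _ hj)⟩) i]
        refine if_congr (and_congr_right fun _ => ?_) rfl rfl
        simp [Finset.mem_insert, hih]
    · rw [if_neg hcond, if_neg hcond]
      dsimp only
      by_cases hih : i = h
      · subst hih
        rw [Function.update_self, if_neg]
        rintro ⟨h1, h2⟩
        rcases Finset.mem_union.1 (runW_subset_union θ rs extra rest W k' h1) with hw | hw
        · exact h2 hw
        · exact (List.nodup_cons.1 hnd).1 (List.mem_toFinset.1 hw)
      · rw [Function.update_of_ne hih]
        exact runAux_fst_eq rest W k' hnd.of_cons
          (fun j hj => hdis j (List.mem_cons_of_mem _ hj)) i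

lemma runAux_fst_not_mem : ∀ (L : List N) (W : Finset N) (k' : ℕ) (i : N), i ∉ L →
    (runAux θ rs extra L W k').1 i = 0
  | [], W, k', i => by intro _; rw [runAux]
  | h :: rest, W, k', i => by
    intro hi
    have h1 : i ≠ h := fun he => hi (he ▸ List.mem_cons_self)
    have h2 : i ∉ rest := fun he => hi (List.mem_cons_of_mem _ he)
    rw [runAux]
    dsimp only
    split
    · dsimp only
      rw [Function.update_of_ne h1]
      exact runAux_fst_not_mem rest _ _ i h2
    · dsimp only
      rw [Function.update_of_ne h1]
      exact runAux_fst_not_mem rest _ _ i h2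

end Run

lemma prioList_nodup (θ : Profile N) (rs : Finset N) : (prioList θ rs).Nodup :=
  ((List.mergeSort_perm _ _).nodup_iff).2 ((Nhat θ rs).sort_nodup _)

lemma mem_prioList (θ : Profile N) (rs : Finset N) (i : N) :
    i ∈ prioList θ rs ↔ i ∈ Nhat θ rs := by
  rw [prioList, (List.mergeSort_perm _ _).mem_iff, Finset.mem_sort]

/-- If the run ends with at least one unit unsold, then every connected buyer whose value
exceeds the reserve `vh` must have won. -/
lemma lemmaA (θ : Profile N) (rs : Finset N) (k : ℕ) (vh : ℝ≥0)
    (hr : 1 ≤ (runW θ rs (Multiset.replicate k vh) (prioList θ rs) ∅ k).2) :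
    ∀ i ∈ prioList θ rs, vh < (θ i).1 →
      i ∈ (runW θ rs (Multiset.replicate k vh) (prioList θ rs) ∅ k).1 := by
  classical
  set extra := Multiset.replicate k vh with hextra
  set L := prioList θ rs with hLdef
  have hnd : L.Nodup := prioList_nodup θ rs
  set F := (runW θ rs extra L ∅ k).1 with hF
  set r := (runW θ rs extra L ∅ k).2 with hrdef
  intro i0 hi0 hv0
  by_contra hi0F
  set Lo : Finset N := (Nhat θ rs).filter (fun j => vh < (θ j).1 ∧ j ∉ F) with hLo
  have hne : Lo.Nonempty := ⟨i0, by
    simp only [hLo, Finset.mem_filter]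
    exact ⟨(mem_prioList θ rs i0).1 hi0, hv0, hi0F⟩⟩
  obtain ⟨i, hiLo, hmax⟩ := Finset.exists_max_image Lo (fun j => (θ j).1) hne
  rw [hLo, Finset.mem_filter] at hiLo
  have hiN := hiLo.1
  have hiv := hiLo.2.1
  have hiF := hiLo.2.2
  have hiL : i ∈ L := (mem_prioList θ rs i).2 hiN
  obtain ⟨L₁, L₂, hsplit⟩ := List.append_of_mem hiL
  have hnd' : (L₁ ++ i :: L₂).Nodup := hsplit ▸ hnd
  obtain ⟨hnd1, hnd2, hdisj⟩ := List.nodup_append.1 hnd'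
  have hiL1 : i ∉ L₁ := fun h => hdisj i h i List.mem_cons_self rfl
  set mid := runW θ rs extra L₁ ∅ k with hmid
  have hrun : runW θ rs extra L ∅ k = runW θ rs extra (i :: L₂) mid.1 mid.2 := by
    rw [hsplit, runW_append]
  have hmidcard := runW_card θ rs extra L₁ ∅ k hnd1 (by simp)
  rw [← hmid] at hmidcard
  have houtcard := runW_card θ rs extra L ∅ k hnd (by simp)
  rw [← hF, ← hrdef] at houtcard
  have hiMid : i ∉ mid.1 := fun h => hiL1 (by
    simpa using runW_subset_union θ rs extra L₁ ∅ k h)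
  have hrle : r ≤ mid.2 := by
    rw [hrdef, hrun]
    exact runW_snd_le θ rs extra (i :: L₂) mid.1 mid.2
  have hk0 : mid.2 ≠ 0 := by omega
  have hcond : ¬ ((((θ i).1 : ℝ≥0∞)) ≥
      kthHighest (((NhatMinus θ rs i \ mid.1).val.map fun j => (θ j).1) + extra) mid.2) := by
    intro hcon
    apply hiF
    rw [hF, hrun, runW, if_pos hcon]
    exact runW_subset_left θ rs extra L₂ _ _ (Finset.mem_insert_self _ _)
  have hlt := lt_of_not_ge hcond
  set pool := ((NhatMinus θ rs i \ mid.1).val.map fun j => (θ j).1) + extra with hpool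
  rw [kthHighest, if_neg hk0] at hlt
  by_cases hsc : Multiset.card pool < mid.2
  · rw [if_pos hsc] at hlt
    exact absurd hlt (by simp)
  · rw [if_neg hsc] at hlt
    set c := ((pool.sort (· ≤ ·)).getD (Multiset.card pool - mid.2) 0 : ℝ≥0) with hcdef
    have hvc : (θ i).1 < c := by exact_mod_cast hlt
    have hvhc : vh < c := lt_trans hiv hvc
    have hcount := kth_countP_ge pool mid.2 hk0 (not_lt.1 hsc)
    rw [← hcdef, hpool, Multiset.countP_add] at hcount
    have hrep : Multiset.countP (fun a => c ≤ a) extra = 0 := by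
      rw [hextra, Multiset.countP_eq_zero]
      intro a ha
      rw [Multiset.eq_of_mem_replicate ha]
      exact not_le.2 hvhc
    rw [Multiset.countP_map, hrep] at hcount
    set B := (NhatMinus θ rs i \ mid.1).filter (fun j => c ≤ (θ j).1) with hB
    have hBcard : mid.2 ≤ B.card := by
      have hval : B.val = Multiset.filter (fun a => c ≤ (θ a).1)
          (NhatMinus θ rs i \ mid.1).val := Finset.filter_val _ _
      have hc2 : B.card = Multiset.card (Multiset.filter (fun a => c ≤ (θ a).1)
          (NhatMinus θ rs i \ mid.1).val) := by rw [Finset.card_def, hval]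
      omega
    have hmidF : mid.1 ⊆ F := by
      rw [hF, hrun]
      exact runW_subset_left θ rs extra (i :: L₂) mid.1 mid.2
    have hBsub : B ⊆ F \ mid.1 := by
      intro j hj
      rw [hB, Finset.mem_filter, Finset.mem_sdiff] at hj
      obtain ⟨⟨hjNm, hjmid⟩, hjc⟩ := hj
      have hjN : j ∈ Nhat θ rs := by
        rw [NhatMinus] at hjNm
        exact (Finset.mem_sdiff.1 hjNm).1
      have hjF : j ∈ F := by
        by_contra hjF
        have hjLo : j ∈ Lo := by
          rw [hLo, Finset.mem_filter]
          exact ⟨hjN, lt_of_lt_of_le hvhc hjc, hjF⟩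
        exact absurd (lt_of_lt_of_le hvc hjc) (not_lt.2 (hmax j hjLo))
      exact Finset.mem_sdiff.2 ⟨hjF, hjmid⟩
    have h5 : (F \ mid.1).card = F.card - mid.1.card := Finset.card_sdiff_of_subset hmidF
    have h6 := Finset.card_le_card hBsub
    have h7 := Finset.card_le_card hmidF
    omega

lemma mem_Nhat_iff (θ : Profile N) (rs : Finset N) (i : N) :
    i ∈ Nhat θ rs ↔ Connected θ rs i := by
  rw [Nhat, Finset.mem_filter]
  exact ⟨fun h => h.2, fun h => ⟨Finset.mem_univ _, h⟩⟩

lemma partI (vbar : ℝ≥0) (k : ℕ) (θ : Profile N) (rs : Finset N) (x : N → ℕ)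
    (hv : ∀ i, (θ i).1 ≤ vbar) (hx1 : ∀ i, x i ≤ 1) (hxk : (∑ i, x i) ≤ k)
    (hxc : ∀ i, x i = 1 → Connected θ rs i) :
    ∑ i, ((θ i).1 : ℝ) * (x i : ℝ) -
        ∑ i, ((θ i).1 : ℝ) * ((DBMres k (vbar / 2) θ rs).1 i : ℝ) ≤
      (k : ℝ) * (vbar : ℝ) / 2 := by
  classical
  set vh : ℝ≥0 := vbar / 2 with hvh
  set extra := Multiset.replicate k vh with hextra
  set L := prioList θ rs with hL
  have hnd : L.Nodup := prioList_nodup θ rs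
  set F := (runW θ rs extra L ∅ k).1 with hF
  set r := (runW θ rs extra L ∅ k).2 with hrdef
  have hcard : r + F.card = k := by
    have h := runW_card θ rs extra L ∅ k hnd (by simp)
    rw [← hF, ← hrdef] at h
    simpa using h
  have hFL : F ⊆ L.toFinset := by
    have h := runW_subset_union θ rs extra L ∅ k
    rw [← hF] at h
    simpa using h
  have hFval : ∀ i ∈ F, vh ≤ (θ i).1 := fun i hi => by
    rcases runW_winner_val θ rs k vh L ∅ k le_rfl i (by rw [← hextra]; exact hF ▸ hi) with h | h
    · simp at h
    · exact h
  have hvhr : ((vh : ℝ≥0) : ℝ) = (vbar : ℝ) / 2 := by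
    rw [hvh]; push_cast; ring
  have hvbar0 : (0:ℝ) ≤ (vbar:ℝ) := vbar.coe_nonneg
  -- the mechanism's allocation as an indicator of F
  have hfeq : ∀ i, (((DBMres k vh θ rs).1 i : ℝ)) = if i ∈ F then 1 else 0 := by
    intro i
    by_cases hiL : i ∈ L
    · rw [DBMres, ← hextra, ← hL,
        runAux_fst_eq θ rs extra L ∅ k hnd (by simp) i]
      by_cases hiF : i ∈ F
      · rw [if_pos ⟨hF ▸ hiF, by simp⟩, if_pos hiF]; norm_num
      · rw [if_neg (fun h => hiF (hF ▸ h.1)), if_neg hiF]; norm_num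
    · rw [DBMres, ← hextra, ← hL, runAux_fst_not_mem θ rs extra L ∅ k i hiL,
        if_neg (fun h => hiL (List.mem_toFinset.1 (hFL h)))]
      norm_num
  have hsum2 : ∑ i, ((θ i).1 : ℝ) * ((DBMres k vh θ rs).1 i : ℝ)
      = ∑ i ∈ F, ((θ i).1 : ℝ) := by
    calc ∑ i, ((θ i).1 : ℝ) * ((DBMres k vh θ rs).1 i : ℝ)
        = ∑ i, (if i ∈ F then ((θ i).1 : ℝ) else 0) := by
          refine Finset.sum_congr rfl fun i _ => ?_
          rw [hfeq i]
          by_cases hiF : i ∈ F <;> simp [hiF]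
      _ = ∑ i ∈ F, ((θ i).1 : ℝ) := by
          rw [Finset.sum_ite_mem, Finset.univ_inter]
  set A : Finset N := Finset.univ.filter (fun i => x i = 1) with hA
  have hsum1 : ∑ i, ((θ i).1 : ℝ) * (x i : ℝ) = ∑ i ∈ A, ((θ i).1 : ℝ) := by
    have hzero : ∀ i ∈ Finset.univ, i ∉ A → ((θ i).1 : ℝ) * (x i : ℝ) = 0 := by
      intro i _ hi
      have h2 : ¬ x i = 1 := fun h =>
        hi (by rw [hA]; exact Finset.mem_filter.2 ⟨Finset.mem_univ _, h⟩)
      have h1 := hx1 i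
      have h0 : x i = 0 := by omega
      rw [h0]
      norm_num
    rw [← Finset.sum_subset (Finset.subset_univ A) hzero]
    refine Finset.sum_congr rfl fun i hi => ?_
    have hx : x i = 1 := (Finset.mem_filter.1
      (by rwa [hA] at hi : i ∈ Finset.univ.filter (fun i => x i = 1))).2
    rw [hx]
    norm_num
  have hAk : A.card ≤ k := by
    calc A.card = ∑ i ∈ A, 1 := by simp
      _ ≤ ∑ i ∈ A, x i :=
          Finset.sum_le_sum (fun i hi => by
            rw [(Finset.mem_filter.1 (by rwa [hA] at hi : i ∈ Finset.univ.filter (fun i => x i = 1))).2])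
      _ ≤ ∑ i, x i := Finset.sum_le_sum_of_subset (Finset.subset_univ _)
      _ ≤ k := hxk
  have hAub : ∑ i ∈ A, ((θ i).1 : ℝ) ≤ (A.card : ℝ) * (vbar : ℝ) := by
    have h := Finset.sum_le_card_nsmul A (fun i => ((θ i).1 : ℝ)) (vbar : ℝ)
      (fun i _ => by exact_mod_cast hv i)
    simpa [nsmul_eq_mul] using h
  rw [hsum1, hsum2]
  rcases Nat.eq_zero_or_pos r with hr0 | hr1
  · -- all k units sold
    have hFk : F.card = k := by omega
    have hFlb : (F.card : ℝ) * ((vbar : ℝ) / 2) ≤ ∑ i ∈ F, ((θ i).1 : ℝ) := by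
      have h := Finset.card_nsmul_le_sum F (fun i => ((θ i).1 : ℝ)) ((vbar : ℝ) / 2)
        (fun i hi => by rw [← hvhr]; exact_mod_cast hFval i hi)
      simpa [nsmul_eq_mul] using h
    have hAcast : (A.card : ℝ) ≤ (k : ℝ) := by exact_mod_cast hAk
    rw [hFk] at hFlb
    nlinarith
  · -- at least one unit left: all high-value connected buyers won
    have hhigh : ∀ i, Connected θ rs i → vh < (θ i).1 → i ∈ F := by
      intro i hc hvi
      have hr1' : 1 ≤ (runW θ rs (Multiset.replicate k vh) (prioList θ rs) ∅ k).2 := by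
        rw [← hextra, ← hL, ← hrdef]; exact hr1
      have h := lemmaA θ rs k vh hr1' i
        ((mem_prioList θ rs i).2 ((mem_Nhat_iff θ rs i).2 hc)) hvi
      rw [← hextra, ← hL, ← hF] at h
      exact h
    have hsplitA : ∑ i ∈ A ∩ F, ((θ i).1 : ℝ) + ∑ i ∈ A \ F, ((θ i).1 : ℝ)
        = ∑ i ∈ A, ((θ i).1 : ℝ) := Finset.sum_inter_add_sum_sdiff A F _
    have hsubF : ∑ i ∈ A ∩ F, ((θ i).1 : ℝ) ≤ ∑ i ∈ F, ((θ i).1 : ℝ) :=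
      Finset.sum_le_sum_of_subset_of_nonneg Finset.inter_subset_right
        (fun i _ _ => ((θ i).1).coe_nonneg)
    have hAFub : ∑ i ∈ A \ F, ((θ i).1 : ℝ) ≤ ((A \ F).card : ℝ) * ((vbar : ℝ) / 2) := by
      have hb : ∀ i ∈ A \ F, ((θ i).1 : ℝ) ≤ (vbar : ℝ) / 2 := by
        intro i hi
        obtain ⟨hiA, hiF⟩ := Finset.mem_sdiff.1 hi
        have hc : Connected θ rs i := hxc i (Finset.mem_filter.1
          (by rwa [hA] at hiA : i ∈ Finset.univ.filter (fun i => x i = 1))).2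
        have hle : (θ i).1 ≤ vh := by
          by_contra hgt
          exact hiF (hhigh i hc (not_le.1 hgt))
        rw [← hvhr]
        exact_mod_cast hle
      have h := Finset.sum_le_card_nsmul (A \ F) (fun i => ((θ i).1 : ℝ)) ((vbar : ℝ) / 2) hb
      simpa [nsmul_eq_mul] using h
    have hcardAF : ((A \ F).card : ℝ) ≤ (k : ℝ) := by
      have h1 : (A \ F).card ≤ A.card := Finset.card_le_card (Finset.sdiff_subset)
      exact_mod_cast le_trans h1 hAk
    nlinarith

lemma partII (vbar : ℝ≥0) (hpos : 0 < vbar) (ε : ℝ) (hε : 0 < ε) :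
    ∃ (n k : ℕ) (θ : Profile (Fin n)) (rs : Finset (Fin n)) (x : Fin n → ℕ),
      0 < k ∧ (∀ i, (θ i).1 ≤ vbar) ∧
      (∀ i, x i ≤ 1) ∧ (∑ i, x i) ≤ k ∧ (∀ i, x i = 1 → Connected θ rs i) ∧
      (1 / 2 - ε) * (k : ℝ) * (vbar : ℝ) <
        ∑ i, ((θ i).1 : ℝ) * (x i : ℝ) -
          ∑ i, ((θ i).1 : ℝ) * ((DBMres k (vbar / 2) θ rs).1 i : ℝ) := by
  classical
  set v0r : ℝ := (vbar : ℝ) / 2 * (1 - min ε 1 / 2) with hv0r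
  have hb : (0:ℝ) < (vbar : ℝ) := by exact_mod_cast hpos
  have h01 : 0 < min ε 1 := lt_min hε one_pos
  have hminle : min ε 1 ≤ 1 := min_le_right _ _
  have hv0pos : 0 < v0r := by nlinarith
  have hv0lt : v0r < (vbar : ℝ) / 2 := by nlinarith
  set v0 : ℝ≥0 := Real.toNNReal v0r with hv0
  have hv0coe : ((v0 : ℝ≥0) : ℝ) = v0r := Real.coe_toNNReal _ hv0pos.le
  set θ : Profile (Fin 1) := fun _ => (v0, (∅ : Finset (Fin 1))) with hθ
  set rs : Finset (Fin 1) := {0} with hrs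
  have hconn : ∀ i : Fin 1, Connected θ rs i := by
    intro i
    refine ⟨0, ?_⟩
    show i ∈ rs
    rw [hrs, Finset.mem_singleton]
    exact Subsingleton.elim _ _
  have hNhat : Nhat θ rs = {(0 : Fin 1)} := by
    ext i
    have hi0 : i = 0 := Subsingleton.elim _ _
    subst hi0
    exact ⟨fun _ => Finset.mem_singleton_self 0, fun _ => (mem_Nhat_iff θ rs 0).2 (hconn 0)⟩
  have hprio : prioList θ rs = [(0 : Fin 1)] := by
    rw [prioList, hNhat, Finset.sort_singleton]
    exact List.perm_singleton.1 (List.mergeSort_perm _ _)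
  have hcoe2 : (((vbar / 2 : ℝ≥0)) : ℝ) = (vbar : ℝ) / 2 := by push_cast; ring
  have hcond : ¬ ((((θ (0 : Fin 1)).1 : ℝ≥0∞)) ≥
      kthHighest (((NhatMinus θ rs 0 \ (∅ : Finset (Fin 1))).val.map fun j => (θ j).1)
        + Multiset.replicate 1 (vbar / 2)) 1) := by
    intro hcon
    have h1 : (((vbar / 2 : ℝ≥0)) : ℝ≥0∞) ≤
        kthHighest (((NhatMinus θ rs 0 \ (∅ : Finset (Fin 1))).val.map fun j => (θ j).1)
          + Multiset.replicate 1 (vbar / 2)) 1 :=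
      vh_le_kthHighest _ 1 1 (vbar / 2) one_ne_zero le_rfl
    have h2 : (((θ (0 : Fin 1)).1 : ℝ≥0∞)) < (((vbar / 2 : ℝ≥0)) : ℝ≥0∞) := by
      rw [ENNReal.coe_lt_coe, ← NNReal.coe_lt_coe, hcoe2]
      show ((v0 : ℝ≥0) : ℝ) < (vbar : ℝ) / 2
      rw [hv0coe]
      exact hv0lt
    exact absurd (le_trans h1 hcon) (not_le.2 h2)
  have hfeq : ∀ i, (DBMres 1 (vbar / 2) θ rs).1 i = 0 := by
    intro i
    have hi0 : i = (0 : Fin 1) := Subsingleton.elim _ _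
    subst hi0
    rw [DBMres, hprio, runAux]
    dsimp only
    rw [if_neg hcond]
    dsimp only
    rw [Function.update_self]
  refine ⟨1, 1, θ, rs, fun _ => 1, one_pos, ?_, fun _ => le_rfl, by simp, fun i _ => hconn i, ?_⟩
  · intro i
    rw [← NNReal.coe_le_coe]
    show ((v0 : ℝ≥0) : ℝ) ≤ (vbar : ℝ)
    rw [hv0coe]
    nlinarith
  · rw [Fin.sum_univ_one, Fin.sum_univ_one, hfeq 0]
    show (1 / 2 - ε) * ((1:ℕ) : ℝ) * (vbar : ℝ) <
      ((v0 : ℝ≥0) : ℝ) * ((1:ℕ) : ℝ) - ((θ (0:Fin 1)).1 : ℝ) * ((0:ℕ) : ℝ)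
    rw [hv0coe]
    push_cast
    have hle : min ε 1 ≤ ε := min_le_left _ _
    nlinarith

lemma partIII (vbar : ℝ≥0) (k : ℕ) (vh : ℝ) (h0 : 0 ≤ vh) (h1 : vh ≤ (vbar : ℝ)) :
    (k : ℝ) * (vbar : ℝ) / 2 ≤ max ((k : ℝ) * vh) ((k : ℝ) * ((vbar : ℝ) - vh)) := by
  have hk : (0:ℝ) ≤ (k : ℝ) := Nat.cast_nonneg k
  rcases le_total vh ((vbar : ℝ) / 2) with h | h
  · refine le_max_of_le_right ?_
    nlinarith
  · refine le_max_of_le_left ?_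
    nlinarith


/-- **Theorem 4.** If every buyer's value is at most `vbar`, the
distance-based mechanism with reserve price `vh = vbar/2` is `1/2`-inefficient:
(i) for every type profile and every feasible allocation `x`, the efficiency loss
`Σ_i v_i·x_i − Σ_i v_i·f_i(θ)` is at most `k·vbar/2`;
(ii) the bound is tight in the worst case: for every `ε > 0` there is an instance whose
normalized efficiency loss exceeds `(1/2 − ε)·k·vbar`;
(iii) `vh = vbar/2` minimizes the worst-case efficiency loss
`max (k·vh) (k·(vbar − vh))` over reserve prices `vh`. -/
theorem distanceBased_reserve_halfInefficient (vbar : ℝ≥0) :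
    (∀ (M : Type) [Fintype M] [DecidableEq M] [LinearOrder M] (k : ℕ) (θ : Profile M)
        (rs : Finset M) (x : M → ℕ),
      (∀ i, (θ i).1 ≤ vbar) →
      (∀ i, x i ≤ 1) → (∑ i, x i) ≤ k → (∀ i, x i = 1 → Connected θ rs i) →
      ∑ i, ((θ i).1 : ℝ) * (x i : ℝ) -
          ∑ i, ((θ i).1 : ℝ) * ((DBMres k (vbar / 2) θ rs).1 i : ℝ) ≤
        (k : ℝ) * (vbar : ℝ) / 2) ∧
    (0 < vbar → ∀ ε : ℝ, 0 < ε →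
      ∃ (n k : ℕ) (θ : Profile (Fin n)) (rs : Finset (Fin n)) (x : Fin n → ℕ),
        0 < k ∧ (∀ i, (θ i).1 ≤ vbar) ∧
        (∀ i, x i ≤ 1) ∧ (∑ i, x i) ≤ k ∧ (∀ i, x i = 1 → Connected θ rs i) ∧
        (1 / 2 - ε) * (k : ℝ) * (vbar : ℝ) <
          ∑ i, ((θ i).1 : ℝ) * (x i : ℝ) -
            ∑ i, ((θ i).1 : ℝ) * ((DBMres k (vbar / 2) θ rs).1 i : ℝ)) ∧
    (∀ (k : ℕ) (vh : ℝ), 0 ≤ vh → vh ≤ (vbar : ℝ) →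
      (k : ℝ) * (vbar : ℝ) / 2 ≤ max ((k : ℝ) * vh) ((k : ℝ) * ((vbar : ℝ) - vh))) := by
  refine ⟨?_, ?_, ?_⟩
  · intro M _ _ _ k θ rs x hv hx1 hxk hxc
    exact partI vbar k θ rs x hv hx1 hxk hxc
  · intro hpos ε hε
    exact partII vbar hpos ε hε
  · intro k vh h0 h1
    exact partIII vbar k vh h0 h1

end SNA
end

section
/- For every k ≥ 2, in the distance-based mechanism with k units, reporting (v_i, ∅) (the true value while hiding all followers) is not a dominant strategy: there exist a buyer i with true type θ_i = (v_i, r_i) and a profile θ'_{-i} of reports of the other buyers such that the utility from the truthful report θ_i strictly exceeds the utility from the report (v_i, ∅). (A concrete witness: k+2 buyers with r_s = {i_1, i_3, i_5, …, i_{k+2}}, θ_{i_1} = (15, {i_2}), θ_{i_2} = (20, ∅), θ_{i_3} = (10, {i_4}), θ_{i_4} = (9, ∅), θ_{i_j} = (30, ∅) for 5 ≤ j ≤ k+2, priority i_5 ≻ ⋯ ≻ i_{k+2} ≻ i_3 ≻ i_1 ≻ i_4 ≻ i_2; forwarding to i_2 lets i_1 win at price 9, hiding makes her pay 10.) -/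
open scoped Classical NNReal ENNReal

namespace SNA

variable {N : Type*} [Fintype N] [DecidableEq N] [LinearOrder N]

/-! ### Witness construction -/

section Witness

def aW (k : ℕ) : Fin (k+1) := ⟨k - 2, by omega⟩
def bW (k : ℕ) : Fin (k+1) := ⟨k - 1, by omega⟩
def cW (k : ℕ) : Fin (k+1) := ⟨k, by omega⟩

noncomputable def θW (k : ℕ) : Profile (Fin (k+1)) := fun j =>
  if (j : ℕ) = k then (1, ∅)
  else if (j : ℕ) = k - 1 then (1, {cW k})
  else if (j : ℕ) = k - 2 then (0, {cW k})
  else (1000, ∅)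

noncomputable def θH (k : ℕ) : Profile (Fin (k+1)) :=
  Function.update (θW k) (bW k) ((θW k (bW k)).1, ∅)

def rsW (k : ℕ) : Finset (Fin (k+1)) := Finset.univ.filter fun j => (j : ℕ) < k

variable {k : ℕ}

lemma ab_ne (hk : 2 ≤ k) : aW k ≠ bW k := by
  simp only [aW, bW, Ne, Fin.mk.injEq]; omega

lemma ac_ne (hk : 2 ≤ k) : aW k ≠ cW k := by
  simp only [aW, cW, Ne, Fin.mk.injEq]; omega

lemma bc_ne (hk : 2 ≤ k) : bW k ≠ cW k := by
  simp only [bW, cW, Ne, Fin.mk.injEq]; omega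

lemma θW_a (hk : 2 ≤ k) : θW k (aW k) = (0, {cW k}) := by
  simp only [θW, aW]; rw [if_neg (by omega), if_neg (by omega)]; simp

lemma θW_b (hk : 2 ≤ k) : θW k (bW k) = (1, {cW k}) := by
  simp only [θW, bW]; rw [if_neg (by omega)]; simp

lemma θW_c (hk : 2 ≤ k) : θW k (cW k) = (1, ∅) := by
  simp only [θW, cW]; simp

lemma θW_f (hk : 2 ≤ k) (j : Fin (k+1)) (hj : (j : ℕ) < k - 2) : θW k j = (1000, ∅) := by
  simp only [θW]; rw [if_neg (by omega), if_neg (by omega), if_neg (by omega)]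

lemma θH_b (hk : 2 ≤ k) : θH k (bW k) = (1, ∅) := by
  simp only [θH, Function.update_self, θW_b hk]

lemma θH_ne (j : Fin (k+1)) (hj : j ≠ bW k) : θH k j = θW k j :=
  Function.update_of_ne hj _ _

lemma val_eq_b (hk : 2 ≤ k) (j : Fin (k+1)) (hj : (j : ℕ) = k - 1) : j = bW k := by
  simp only [bW, Fin.ext_iff]; omega

lemma θH_fst (j : Fin (k+1)) : (θH k j).1 = (θW k j).1 := by
  by_cases h : j = bW k
  · subst h; simp [θH]
  · rw [θH_ne j h]

lemma mem_rsW (j : Fin (k+1)) : j ∈ rsW k ↔ (j : ℕ) < k := by simp [rsW]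

lemma edge_θW (hk : 2 ≤ k) (j x : Fin (k+1)) (hx : x ∈ (θW k j).2) :
    x = cW k ∧ ((j : ℕ) = k - 1 ∨ (j : ℕ) = k - 2) := by
  simp only [θW] at hx
  split_ifs at hx with h1 h2 h3 <;> simp_all

lemma edge_θH (hk : 2 ≤ k) (j x : Fin (k+1)) (hx : x ∈ (θH k j).2) :
    x = cW k ∧ j = aW k := by
  by_cases h : j = bW k
  · subst h; rw [θH_b hk] at hx; simp at hx
  · rw [θH_ne j h] at hx
    obtain ⟨hc, hj⟩ := edge_θW hk j x hx
    refine ⟨hc, ?_⟩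
    rcases hj with hj | hj
    · exact absurd (val_eq_b hk j hj) h
    · simp only [aW, Fin.ext_iff]; omega


lemma conn_rs {θ : Profile (Fin (k+1))} {j : Fin (k+1)} (hj : (j : ℕ) < k) :
    Connected θ (rsW k) j :=
  ⟨0, (mem_rsW j).2 hj⟩

lemma a_mem_rs (hk : 2 ≤ k) : aW k ∈ rsW k := (mem_rsW _).2 (by simp [aW]; omega)

lemma conn_c_W (hk : 2 ≤ k) : Connected (θW k) (rsW k) (cW k) :=
  ⟨1, aW k, a_mem_rs hk, by rw [θW_a hk]; exact Finset.mem_singleton_self _⟩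

lemma conn_c_H (hk : 2 ≤ k) : Connected (θH k) (rsW k) (cW k) :=
  ⟨1, aW k, a_mem_rs hk, by
    rw [θH_ne _ (ab_ne hk), θW_a hk]; exact Finset.mem_singleton_self _⟩

lemma conn_all_W (hk : 2 ≤ k) (j : Fin (k+1)) : Connected (θW k) (rsW k) j := by
  rcases lt_or_eq_of_le (Nat.lt_succ_iff.1 j.isLt) with h | h
  · exact conn_rs h
  · have : j = cW k := by simp [cW, Fin.ext_iff, h]
    rw [this]; exact conn_c_W hk

lemma conn_all_H (hk : 2 ≤ k) (j : Fin (k+1)) : Connected (θH k) (rsW k) j := by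
  rcases lt_or_eq_of_le (Nat.lt_succ_iff.1 j.isLt) with h | h
  · exact conn_rs h
  · have : j = cW k := by simp [cW, Fin.ext_iff, h]
    rw [this]; exact conn_c_H hk

lemma Nhat_W (hk : 2 ≤ k) : Nhat (θW k) (rsW k) = Finset.univ := by
  ext j; simp [Nhat, conn_all_W hk j]

lemma Nhat_H (hk : 2 ≤ k) : Nhat (θH k) (rsW k) = Finset.univ := by
  ext j; simp [Nhat, conn_all_H hk j]

lemma dNet_rs (θ : Profile (Fin (k+1))) (j : Fin (k+1)) (hj : (j : ℕ) < k) :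
    dNet θ (rsW k) j = 1 := by
  apply le_antisymm
  · exact sInf_le ⟨0, (mem_rsW j).2 hj, by norm_num⟩
  · refine le_sInf ?_
    rintro n ⟨m, hm, rfl⟩
    exact le_add_self

lemma c_not_rs {θ : Profile (Fin (k+1))} : ¬ reachIn θ (rsW k) 0 (cW k) := by
  intro h
  rw [show (reachIn θ (rsW k) 0 (cW k)) = (cW k ∈ rsW k) from rfl, mem_rsW] at h
  simp [cW] at h

lemma dNet_c_aux (θ : Profile (Fin (k+1)))
    (hedge : cW k ∈ (θ (aW k)).2) (ha : (aW k : ℕ) < k) :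
    dNet θ (rsW k) (cW k) = 2 := by
  apply le_antisymm
  · exact sInf_le ⟨1, ⟨aW k, (mem_rsW _).2 ha, hedge⟩, by norm_num⟩
  · refine le_sInf ?_
    rintro n ⟨m, hm, rfl⟩
    match m, hm with
    | 0, hm => exact absurd hm c_not_rs
    | m + 1, hm =>
      have : ((2:ℕ) : ℕ∞) ≤ ((m + 1 + 1 : ℕ) : ℕ∞) := by
        rw [Nat.cast_le]; omega
      simpa using this

lemma dNet_c_W (hk : 2 ≤ k) : dNet (θW k) (rsW k) (cW k) = 2 :=
  dNet_c_aux _ (by rw [θW_a hk]; exact Finset.mem_singleton_self _)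
    (by simp [aW]; omega)

lemma dNet_c_H (hk : 2 ≤ k) : dNet (θH k) (rsW k) (cW k) = 2 :=
  dNet_c_aux _ (by
      rw [θH_ne _ (ab_ne hk), θW_a hk]
      exact Finset.mem_singleton_self _)
    (by simp [aW]; omega)

lemma prioList_eq (θ : Profile (Fin (k+1))) (hk : 2 ≤ k)
    (hN : Nhat θ (rsW k) = Finset.univ)
    (hc : dNet θ (rsW k) (cW k) = 2) :
    prioList θ (rsW k) = List.finRange (k+1) := by
  unfold prioList
  rw [hN]
  rw [show (Finset.univ.sort fun x y : Fin (k+1) => x ≤ y) = List.finRange (k+1) from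
    Fin.sort_univ (k+1)]
  apply List.mergeSort_of_pairwise
  refine (List.pairwise_lt_finRange (k+1)).imp ?_
  intro x y hxy
  have hxy' : (x : ℕ) < (y : ℕ) := hxy
  rw [decide_eq_true_eq]
  rcases lt_or_eq_of_le (Nat.lt_succ_iff.1 y.isLt) with h | h
  · rw [dNet_rs θ x (lt_trans hxy' h), dNet_rs θ y h]
  · have hy : y = cW k := by simp [cW, Fin.ext_iff, h]
    have hx : (x : ℕ) < k := by omega
    rw [hy, hc, dNet_rs θ x hx]
    norm_num

lemma reachInAvoid_ne {θ : Profile (Fin (k+1))} {x j : Fin (k+1)} {m : ℕ}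
    (h : reachInAvoid θ (rsW k) x m j) : j ≠ x := by
  match m, h with
  | 0, h => exact h.2
  | m + 1, h => obtain ⟨a, _, _, hne⟩ := h; exact hne

lemma not_crit {θ : Profile (Fin (k+1))} {x j : Fin (k+1)}
    (h : ∃ m, reachInAvoid θ (rsW k) x m j) : ¬ CriticalParent θ (rsW k) x j :=
  fun hc => hc.2.2.2 h

lemma desc_eq_singleton (θ : Profile (Fin (k+1))) (x : Fin (k+1))
    (hconn : ∀ j, Connected θ (rsW k) j)
    (h : ∀ j, j ≠ x → ∃ m, reachInAvoid θ (rsW k) x m j) :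
    desc θ (rsW k) x = {x} := by
  ext j
  simp only [desc, Finset.mem_filter, Finset.mem_univ, true_and, Finset.mem_singleton]
  constructor
  · rintro ⟨-, hj | hj⟩
    · exact hj
    · exact absurd (h j (Ne.symm hj.2.2.1)) hj.2.2.2
  · rintro rfl
    exact ⟨hconn j, Or.inl rfl⟩

lemma avoid_rs {θ : Profile (Fin (k+1))} {x j : Fin (k+1)} (hj : (j : ℕ) < k)
    (hne : j ≠ x) : ∃ m, reachInAvoid θ (rsW k) x m j :=
  ⟨0, (mem_rsW j).2 hj, hne⟩

lemma avoid_c_via {θ : Profile (Fin (k+1))} {x p : Fin (k+1)} (hp : (p : ℕ) < k)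
    (hpx : p ≠ x) (hcx : cW k ≠ x) (hedge : cW k ∈ (θ p).2) :
    ∃ m, reachInAvoid θ (rsW k) x m (cW k) :=
  ⟨1, p, ⟨(mem_rsW p).2 hp, hpx⟩, hedge, hcx⟩

lemma desc_W (hk : 2 ≤ k) (x : Fin (k+1)) : desc (θW k) (rsW k) x = {x} := by
  refine desc_eq_singleton _ _ (conn_all_W hk) ?_
  intro j hj
  rcases lt_or_eq_of_le (Nat.lt_succ_iff.1 j.isLt) with h | h
  · exact avoid_rs h hj
  · have hjc : j = cW k := by simp [cW, Fin.ext_iff, h]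
    subst hjc
    by_cases hax : aW k = x
    · refine avoid_c_via (p := bW k) (by simp [bW]; omega) ?_ hj
        (by rw [θW_b hk]; exact Finset.mem_singleton_self _)
      rw [← hax]; exact (ab_ne hk).symm
    · exact avoid_c_via (by simp [aW]; omega) hax hj
        (by rw [θW_a hk]; exact Finset.mem_singleton_self _)

lemma desc_H (hk : 2 ≤ k) (x : Fin (k+1)) (hx : x ≠ aW k) :
    desc (θH k) (rsW k) x = {x} := by
  refine desc_eq_singleton _ _ (conn_all_H hk) ?_
  intro j hj
  rcases lt_or_eq_of_le (Nat.lt_succ_iff.1 j.isLt) with h | h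
  · exact avoid_rs h hj
  · have hjc : j = cW k := by simp [cW, Fin.ext_iff, h]
    subst hjc
    refine avoid_c_via (by simp [aW]; omega) (Ne.symm hx) hj ?_
    rw [θH_ne _ (ab_ne hk), θW_a hk]
    exact Finset.mem_singleton_self _

lemma crit_H_ac (hk : 2 ≤ k) : CriticalParent (θH k) (rsW k) (aW k) (cW k) := by
  refine ⟨conn_c_H hk, conn_all_H hk _, ac_ne hk, ?_⟩
  rintro ⟨m, hm⟩
  match m, hm with
  | 0, hm => exact absurd ((mem_rsW _).1 hm.1) (by simp [cW])
  | m + 1, hm =>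
    obtain ⟨x, hx, hmem, -⟩ := hm
    have hxa : x = aW k := (edge_θH hk x _ hmem).2
    exact reachInAvoid_ne hx hxa

lemma desc_H_a (hk : 2 ≤ k) : desc (θH k) (rsW k) (aW k) = {aW k, cW k} := by
  ext j
  simp only [desc, Finset.mem_filter, Finset.mem_univ, true_and, Finset.mem_insert,
    Finset.mem_singleton]
  constructor
  · rintro ⟨-, hj | hj⟩
    · exact Or.inl hj
    · right
      by_contra hne
      rcases lt_or_eq_of_le (Nat.lt_succ_iff.1 j.isLt) with h | h
      · exact hj.2.2.2 (avoid_rs h (Ne.symm hj.2.2.1))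
      · exact hne (by simp [cW, Fin.ext_iff, h])
  · rintro (rfl | rfl)
    · exact ⟨conn_all_H hk _, Or.inl rfl⟩
    · exact ⟨conn_c_H hk, Or.inr (crit_H_ac hk)⟩

/-! ### kthHighest computations -/

lemma kthHighest_card_lt {s : Multiset ℝ≥0} {k' : ℕ} (h0 : k' ≠ 0)
    (h : Multiset.card s < k') : kthHighest s k' = 0 := by
  simp [kthHighest, h0, h]

lemma kthHighest_min {s : Multiset ℝ≥0} {k' : ℕ} (h0 : k' ≠ 0)
    (hcard : Multiset.card s = k') {c : ℝ≥0} (hc : c ∈ s)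
    (hmin : ∀ y ∈ s, c ≤ y) : kthHighest s k' = (c : ℝ≥0∞) := by
  rw [kthHighest, if_neg h0, if_neg (by omega)]
  have hlen : (s.sort (· ≤ ·)).length = k' := by rw [Multiset.length_sort, hcard]
  have hne : s.sort (· ≤ ·) ≠ [] := by
    intro h; rw [h] at hlen; simp at hlen; omega
  obtain ⟨hd, tl, hht⟩ := List.exists_cons_of_ne_nil hne
  have hsub : Multiset.card s - k' = 0 := by omega
  rw [hsub, hht]
  simp only [List.getD_cons_zero]
  norm_cast
  have hsorted : List.Pairwise (· ≤ ·) (hd :: tl) := hht ▸ Multiset.pairwise_sort s _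
  have hdmem : hd ∈ s := by
    rw [← Multiset.mem_sort (· ≤ ·), hht]; exact List.mem_cons_self
  have hcs : c ∈ hd :: tl := by rw [← hht, Multiset.mem_sort]; exact hc
  refine le_antisymm ?_ (hmin hd hdmem)
  rcases List.mem_cons.1 hcs with rfl | hcs
  · exact le_refl _
  · exact List.rel_of_pairwise_cons hsorted hcs

/-! ### The run of the mechanism -/

def WS (k t : ℕ) : Finset (Fin (k+1)) := Finset.univ.filter fun j => (j : ℕ) < t

lemma WS_zero : WS k 0 = ∅ := by simp [WS]

lemma insert_WS (t : ℕ) (ht : t ≤ k) :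
    insert (⟨t, by omega⟩ : Fin (k+1)) (WS k t) = WS k (t+1) := by
  ext j; simp [WS, Fin.ext_iff]; omega

lemma sdiff_WS (t : ℕ) (ht : t ≤ k) :
    (Finset.univ \ {(⟨t, by omega⟩ : Fin (k+1))}) \ WS k t
      = Finset.univ.filter fun j : Fin (k+1) => t < (j : ℕ) := by
  ext j; simp [WS, Fin.ext_iff]; omega

lemma card_gt (t : ℕ) (ht : t ≤ k) :
    (Finset.univ.filter fun j : Fin (k+1) => t < (j : ℕ)).card = k - t := by
  have h1 : (Finset.univ.filter fun j : Fin (k+1) => t < (j : ℕ))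
      = Finset.Ioi ⟨t, by omega⟩ := by
    ext j; simp [Fin.lt_def]
  rw [h1, Fin.card_Ioi]; simp

lemma getElem_fr (t : ℕ) (h : t < (List.finRange (k+1)).length) :
    (List.finRange (k+1))[t] = ⟨t, by simpa using h⟩ := by
  apply Fin.ext; simp

lemma run_fillers (θ : Profile (Fin (k+1))) (hk : 2 ≤ k)
    (hval : ∀ j, (θ j).1 = (θW k j).1)
    (hNm : ∀ (t : ℕ) (ht : t < k - 2),
      NhatMinus θ (rsW k) ⟨t, by omega⟩ = Finset.univ \ {⟨t, by omega⟩}) :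
    ∀ d t, t + d = k - 2 →
      ((runAux θ (rsW k) 0 ((List.finRange (k+1)).drop t) (WS k t) (k - t)).1 (bW k),
       (runAux θ (rsW k) 0 ((List.finRange (k+1)).drop t) (WS k t) (k - t)).2 (bW k)) =
      ((runAux θ (rsW k) 0 ((List.finRange (k+1)).drop (k-2)) (WS k (k-2)) 2).1 (bW k),
       (runAux θ (rsW k) 0 ((List.finRange (k+1)).drop (k-2)) (WS k (k-2)) 2).2 (bW k)) := by
  intro d
  induction d with
  | zero =>
    intro t ht
    have h1 : t = k - 2 := by omega
    subst h1
    rw [show k - (k - 2) = 2 by omega]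
  | succ d ih =>
    intro t ht
    have ht2 : t < k - 2 := by omega
    have htlen : t < (List.finRange (k+1)).length := by simp; omega
    rw [List.drop_eq_getElem_cons htlen, getElem_fr t htlen, runAux]
    have hpool : NhatMinus θ (rsW k) ⟨t, by omega⟩ \ WS k t
        = Finset.univ.filter fun j : Fin (k+1) => t < (j : ℕ) := by
      rw [hNm t ht2, sdiff_WS t (by omega)]
    have hp : kthHighest
        ((Multiset.map (fun j => (θ j).1)
          (NhatMinus θ (rsW k) ⟨t, by omega⟩ \ WS k t).val) + 0) (k - t) = 0 := by
      rw [add_zero, hpool]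
      refine kthHighest_min (by omega) ?_ (c := 0) ?_ (fun y _ => zero_le)
      · rw [Multiset.card_map]
        exact card_gt t (by omega)
      · refine Multiset.mem_map.2 ⟨aW k, ?_, ?_⟩
        · rw [Finset.mem_val, Finset.mem_filter]
          refine ⟨Finset.mem_univ _, ?_⟩
          simp [aW]; omega
        · rw [hval, θW_a hk]
    rw [hp, if_pos (zero_le : (0:ℝ≥0∞) ≤ _)]
    have hbne : bW k ≠ (⟨t, by omega⟩ : Fin (k+1)) := by
      simp [bW, Fin.ext_iff]; omega
    simp only [Function.update_of_ne hbne]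
    rw [insert_WS t (by omega), show k - t - 1 = k - (t+1) by omega]
    exact ih (t+1) (by omega)

lemma drop_k2 (hk : 2 ≤ k) :
    (List.finRange (k+1)).drop (k-2) = [aW k, bW k, cW k] := by
  have l1 : k - 2 < (List.finRange (k+1)).length := by simp
  have l2 : k - 1 < (List.finRange (k+1)).length := by simp
  have l3 : k < (List.finRange (k+1)).length := by simp
  rw [List.drop_eq_getElem_cons l1, getElem_fr _ l1, show k - 2 + 1 = k - 1 by omega,
    List.drop_eq_getElem_cons l2, getElem_fr _ l2, show k - 1 + 1 = k by omega,
    List.drop_eq_getElem_cons l3, getElem_fr _ l3]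
  rw [List.drop_eq_nil_of_le (by simp : (List.finRange (k+1)).length ≤ k+1)]
  rfl

lemma pair_mem (hk : 2 ≤ k) {x y j : Fin (k+1)} :
    j ∈ ({x, y} : Finset (Fin (k+1))) ↔ j = x ∨ j = y := by
  simp

lemma truthful_base (hk : 2 ≤ k) :
    (runAux (θW k) (rsW k) 0 ((List.finRange (k+1)).drop (k-2)) (WS k (k-2)) 2).1 (bW k) = 1 ∧
    (runAux (θW k) (rsW k) 0 ((List.finRange (k+1)).drop (k-2)) (WS k (k-2)) 2).2 (bW k) = 0 := by
  rw [drop_k2 hk, runAux]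
  have hNa : NhatMinus (θW k) (rsW k) (aW k) \ WS k (k-2) = {bW k, cW k} := by
    unfold NhatMinus
    rw [Nhat_W hk, desc_W hk]
    ext j
    have hj := j.isLt
    simp only [Finset.mem_sdiff, Finset.mem_univ, Finset.mem_singleton, true_and,
      Finset.mem_insert, WS, Finset.mem_filter, aW, bW, cW, Fin.ext_iff]
    omega
  have hpa : kthHighest
      ((Multiset.map (fun j => (θW k j).1) (NhatMinus (θW k) (rsW k) (aW k) \ WS k (k-2)).val)
        + 0) 2 = ((1 : ℝ≥0) : ℝ≥0∞) := by
    rw [add_zero, hNa]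
    refine kthHighest_min (by omega) ?_ (c := 1) ?_ ?_
    · rw [Multiset.card_map]
      show ({bW k, cW k} : Finset (Fin (k+1))).card = 2
      rw [Finset.card_insert_of_notMem (by simp [bc_ne hk]), Finset.card_singleton]
    · exact Multiset.mem_map.2 ⟨bW k, by simp, by rw [θW_b hk]⟩
    · rintro y hy
      obtain ⟨x, hx, rfl⟩ := Multiset.mem_map.1 hy
      rw [Finset.mem_val] at hx
      rcases (pair_mem hk).1 hx with rfl | rfl
      · rw [θW_b hk]
      · rw [θW_c hk]
  rw [hpa, if_neg (by rw [θW_a hk]; simp)]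
  simp only [Function.update_of_ne (ab_ne hk).symm]
  rw [runAux]
  have hNb : NhatMinus (θW k) (rsW k) (bW k) \ WS k (k-2) = {aW k, cW k} := by
    unfold NhatMinus
    rw [Nhat_W hk, desc_W hk]
    ext j
    have hj := j.isLt
    simp only [Finset.mem_sdiff, Finset.mem_univ, Finset.mem_singleton, true_and,
      Finset.mem_insert, WS, Finset.mem_filter, aW, bW, cW, Fin.ext_iff]
    omega
  have hpb : kthHighest
      ((Multiset.map (fun j => (θW k j).1) (NhatMinus (θW k) (rsW k) (bW k) \ WS k (k-2)).val)
        + 0) 2 = ((0 : ℝ≥0) : ℝ≥0∞) := by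
    rw [add_zero, hNb]
    refine kthHighest_min (by omega) ?_ (c := 0) ?_ (fun y _ => zero_le)
    · rw [Multiset.card_map]
      show ({aW k, cW k} : Finset (Fin (k+1))).card = 2
      rw [Finset.card_insert_of_notMem (by simp [ac_ne hk]), Finset.card_singleton]
    · exact Multiset.mem_map.2 ⟨aW k, by simp, by rw [θW_a hk]⟩
  rw [hpb, ENNReal.coe_zero, if_pos (zero_le : (0:ℝ≥0∞) ≤ _)]
  constructor
  · simp
  · simp

lemma hidden_base (hk : 2 ≤ k) :
    (runAux (θH k) (rsW k) 0 ((List.finRange (k+1)).drop (k-2)) (WS k (k-2)) 2).1 (bW k) = 1 ∧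
    (runAux (θH k) (rsW k) 0 ((List.finRange (k+1)).drop (k-2)) (WS k (k-2)) 2).2 (bW k) = 1 := by
  rw [drop_k2 hk, runAux]
  have hNa : NhatMinus (θH k) (rsW k) (aW k) \ WS k (k-2) = {bW k} := by
    unfold NhatMinus
    rw [Nhat_H hk, desc_H_a hk]
    ext j
    have hj := j.isLt
    simp only [Finset.mem_sdiff, Finset.mem_univ, Finset.mem_singleton, true_and,
      Finset.mem_insert, WS, Finset.mem_filter, aW, bW, cW, Fin.ext_iff]
    omega
  have hpa : kthHighest
      ((Multiset.map (fun j => (θH k j).1) (NhatMinus (θH k) (rsW k) (aW k) \ WS k (k-2)).val)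
        + 0) 2 = 0 := by
    rw [add_zero, hNa]
    refine kthHighest_card_lt (by omega) ?_
    rw [Multiset.card_map]
    show ({bW k} : Finset (Fin (k+1))).card < 2
    rw [Finset.card_singleton]; omega
  rw [hpa, if_pos (zero_le : (0:ℝ≥0∞) ≤ _)]
  simp only [Function.update_of_ne (ab_ne hk).symm]
  have hWins : insert (aW k) (WS k (k-2)) = WS k (k-1) := by
    ext j
    simp only [Finset.mem_insert, WS, Finset.mem_filter, Finset.mem_univ, true_and, aW,
      Fin.ext_iff]
    omega
  rw [hWins, runAux]
  have hNb : NhatMinus (θH k) (rsW k) (bW k) \ WS k (k-1) = {cW k} := by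
    unfold NhatMinus
    rw [Nhat_H hk, desc_H hk _ (ab_ne hk).symm]
    ext j
    have hj := j.isLt
    simp only [Finset.mem_sdiff, Finset.mem_univ, Finset.mem_singleton, true_and,
      WS, Finset.mem_filter, bW, cW, Fin.ext_iff]
    omega
  have hpb : kthHighest
      ((Multiset.map (fun j => (θH k j).1) (NhatMinus (θH k) (rsW k) (bW k) \ WS k (k-1)).val)
        + 0) (2 - 1) = ((1 : ℝ≥0) : ℝ≥0∞) := by
    rw [add_zero, hNb]
    refine kthHighest_min (by omega) ?_ (c := 1) ?_ ?_
    · rw [Multiset.card_map, show ({cW k} : Finset (Fin (k+1))).val.card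
        = ({cW k} : Finset (Fin (k+1))).card from rfl, Finset.card_singleton]
    · refine Multiset.mem_map.2 ⟨cW k, by simp, ?_⟩
      rw [θH_ne _ (bc_ne hk).symm, θW_c hk]
    · rintro y hy
      obtain ⟨x, hx, rfl⟩ := Multiset.mem_map.1 hy
      rw [Finset.mem_val, Finset.mem_singleton] at hx
      subst hx
      rw [θH_ne _ (bc_ne hk).symm, θW_c hk]
  rw [hpb, if_pos (by rw [θH_b hk])]
  constructor
  · simp
  · simp

lemma DBM_W (hk : 2 ≤ k) :
    (DBM k (θW k) (rsW k)).1 (bW k) = 1 ∧ (DBM k (θW k) (rsW k)).2 (bW k) = 0 := by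
  have h0 := run_fillers (θW k) hk (fun j => rfl)
    (fun t ht => by unfold NhatMinus; rw [Nhat_W hk, desc_W hk]) (k-2) 0 (by omega)
  unfold DBM
  rw [prioList_eq _ hk (Nhat_W hk) (dNet_c_W hk),
    show (∅ : Finset (Fin (k+1))) = WS k 0 from WS_zero.symm]
  have h1 : (runAux (θW k) (rsW k) 0 (List.finRange (k+1)) (WS k 0) k).1 (bW k)
      = (runAux (θW k) (rsW k) 0 ((List.finRange (k+1)).drop (k-2)) (WS k (k-2)) 2).1 (bW k) :=
    congrArg Prod.fst h0
  have h2 : (runAux (θW k) (rsW k) 0 (List.finRange (k+1)) (WS k 0) k).2 (bW k)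
      = (runAux (θW k) (rsW k) 0 ((List.finRange (k+1)).drop (k-2)) (WS k (k-2)) 2).2 (bW k) :=
    congrArg Prod.snd h0
  rw [h1, h2]
  exact truthful_base hk

lemma DBM_H (hk : 2 ≤ k) :
    (DBM k (θH k) (rsW k)).1 (bW k) = 1 ∧ (DBM k (θH k) (rsW k)).2 (bW k) = 1 := by
  have h0 := run_fillers (θH k) hk θH_fst
    (fun t ht => by
      unfold NhatMinus
      rw [Nhat_H hk, desc_H hk _ (by simp [aW, Fin.ext_iff]; omega)]) (k-2) 0 (by omega)
  unfold DBM
  rw [prioList_eq _ hk (Nhat_H hk) (dNet_c_H hk),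
    show (∅ : Finset (Fin (k+1))) = WS k 0 from WS_zero.symm]
  have h1 : (runAux (θH k) (rsW k) 0 (List.finRange (k+1)) (WS k 0) k).1 (bW k)
      = (runAux (θH k) (rsW k) 0 ((List.finRange (k+1)).drop (k-2)) (WS k (k-2)) 2).1 (bW k) :=
    congrArg Prod.fst h0
  have h2 : (runAux (θH k) (rsW k) 0 (List.finRange (k+1)) (WS k 0) k).2 (bW k)
      = (runAux (θH k) (rsW k) 0 ((List.finRange (k+1)).drop (k-2)) (WS k (k-2)) 2).2 (bW k) :=
    congrArg Prod.snd h0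
  rw [h1, h2]
  exact hidden_base hk

end Witness

/-- **Proposition 4.** For every `k ≥ 2`, in the distance-based mechanism
with `k` units, reporting `(v_i, ∅)` (the true value while hiding all followers) is not a
dominant strategy: there are a buyer `i` with true type `θ i = (v_i, r_i)` and a profile
of reports of the other buyers such that the utility from the truthful report strictly
exceeds the utility from the report `(v_i, ∅)`. -/
theorem distanceBased_hiding_not_dominant (k : ℕ) (hk : 2 ≤ k) :
    ∃ (n : ℕ) (θ : Profile (Fin n)) (rs : Finset (Fin n)) (i : Fin n),
      ((θ i).1 : ℝ) * ((DBM k (Function.update θ i ((θ i).1, ∅)) rs).1 i : ℝ) -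
          ((DBM k (Function.update θ i ((θ i).1, ∅)) rs).2 i : ℝ) <
        ((θ i).1 : ℝ) * ((DBM k θ rs).1 i : ℝ) - ((DBM k θ rs).2 i : ℝ) := by
  refine ⟨k+1, θW k, rsW k, bW k, ?_⟩
  have hupd : Function.update (θW k) (bW k) ((θW k (bW k)).1, ∅) = θH k := rfl
  rw [hupd]
  obtain ⟨hf1, ht1⟩ := DBM_W hk
  obtain ⟨hf2, ht2⟩ := DBM_H hk
  rw [hf1, ht1, hf2, ht2, show (θW k (bW k)).1 = 1 by rw [θW_b hk]]
  norm_num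

end SNA
end
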